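/- arXiv:math/0503527 — 2 statements merged into one kernel-verified Lean document; each statement's English description precedes it below -/
import Mathlib

section
/- For all n ≥ 1, all i, j ∈ E and all t ∈ ℝ, the n-fold convolution of F satisfies F^{(n)}_{ij}(t) = E_j[(Φ_1⋯Φ_n)^κ 1_{log(Φ_1⋯Φ_n) ≤ t} 1_{X_n = i}]. -/
open MeasureTheory ProbabilityTheory Filter

noncomputable section

/-- Spectral radius of a real square matrix: the largest modulus of a complex root of
its characteristic polynomial. -/
def specRad {N : ℕ} (M : Matrix (Fin N) (Fin N) ℝ) : ℝ :=
  sSup {r : ℝ | ∃ z : ℂ, (M.map (Complex.ofReal ·)).charpoly.IsRoot z ∧ r = ‖z‖}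

/-- The setting of de Saporta and Yao "Tail of a linear diffusion with Markov switching":
a stationary Markov jump process `X` on `E = Fin N` (`N > 1`), with positive intensity
function `lam`, irreducible jump kernel `q` vanishing on the diagonal, invariant probability
vector `μ` (`μ Q = 0` for the generator `Q i j = lam i * (q i j - δ_{ij})`), right-continuous
step sample paths, transition semigroup `exp(tQ)` and marginal law `μ` at every time,
together with a coefficient function `a : E → ℝ`. -/
structure MSS (N : ℕ) (Ω : Type*) [MeasurableSpace Ω] where
  hN : 1 < N
  lam : Fin N → ℝ
  hlam : ∀ i, 0 < lam i
  q : Matrix (Fin N) (Fin N) ℝ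
  hq_nonneg : ∀ i j, 0 ≤ q i j
  hq_row : ∀ i, ∑ j, q i j = 1
  hq_diag : ∀ i, q i i = 0
  hq_irred : ∀ i j, ∃ k, 1 ≤ k ∧ 0 < (q ^ k) i j
  μ : Fin N → ℝ
  hμ_pos : ∀ i, 0 < μ i
  hμ_sum : ∑ i, μ i = 1
  hμ_inv : ∀ j, ∑ i, μ i * (lam i * (q i j - if i = j then 1 else 0)) = 0
  a : Fin N → ℝ
  P : Measure Ω
  hP : IsProbabilityMeasure P
  X : ℝ → Ω → Fin N
  hX_meas : ∀ t, Measurable (X t)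
  hX_rightcont : ∀ ω t, ∃ ε > 0, ∀ u ∈ Set.Ico t (t + ε), X u ω = X t ω
  hX_stationary : ∀ (h : ℝ) (n : ℕ) (ts : Fin n → ℝ) (is : Fin n → Fin N),
      P {ω | ∀ k, X (ts k + h) ω = is k} = P {ω | ∀ k, X (ts k) ω = is k}
  hX_marginal : ∀ t i, P {ω | X t ω = i} = ENNReal.ofReal (μ i)
  hX_markov : ∀ s t : ℝ, s ≤ t → ∀ f : Fin N → ℝ,
      (P[(fun ω => f (X t ω)) | ⨆ u ∈ Set.Iic s, MeasurableSpace.comap (X u) ⊤])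
        =ᵐ[P] fun ω =>
          ∑ j, (NormedSpace.exp ((t - s) •
              (Matrix.of fun i j => lam i * (q i j - if i = j then 1 else 0)))) (X s ω) j * f j

namespace MSS

variable {N : ℕ} {Ω : Type*} [MeasurableSpace Ω] (S : MSS N Ω)

/-- `Φ(s,t) = exp ∫_s^t a(X_u) du`. -/
def Phi (s t : ℝ) (ω : Ω) : ℝ := Real.exp (∫ u in s..t, S.a (S.X u ω))

/-- The conditional law `P_i = P_μ(· | X_0 = i)`. -/
def condP (i : Fin N) : Measure Ω := S.P[|{ω | S.X 0 ω = i}]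

/-- The matrix `A_{(s,δ)}` with entries `(A_{(s,δ)})_{ij} = E_i[Φ(0,δ)^s 1_{X_δ = j}]`. -/
def A (s δ : ℝ) : Matrix (Fin N) (Fin N) ℝ :=
  Matrix.of fun i j => ∫ ω in {ω | S.X δ ω = j}, (S.Phi 0 δ ω) ^ s ∂(S.condP i)

/-- `s₁ = min {λ(i)/a(i) : i ∈ E, a(i) > 0}`. -/
def s1 : ℝ := sInf {r : ℝ | ∃ i, 0 < S.a i ∧ r = S.lam i / S.a i}

/-- The matrix `M_s` with entries `(M_s)_{ij} = q(i,j) λ(i)/(λ(i) - s a(i))`. -/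
def M (s : ℝ) : Matrix (Fin N) (Fin N) ℝ :=
  Matrix.of fun i j => S.q i j * S.lam i / (S.lam i - s * S.a i)

end MSS

/-- The setting extended with a volatility function `sig : E → ℝ` and an i.i.d. standard
Gaussian sequence `(ξ_n)_{n ∈ ℤ}` independent of `X`. -/
structure MSSN (N : ℕ) (Ω : Type*) [MeasurableSpace Ω] extends MSS N Ω where
  sig : Fin N → ℝ
  ξ : ℤ → Ω → ℝ
  hξ_meas : ∀ n, Measurable (ξ n)
  hξ_law : ∀ n, P.map (ξ n) = gaussianReal 0 1
  hξ_iid : iIndepFun ξ P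
  hξ_indepX : Indep (⨆ n : ℤ, MeasurableSpace.comap (ξ n) inferInstance)
      (⨆ t : ℝ, MeasurableSpace.comap (X t) ⊤) P

namespace MSSN

variable {N : ℕ} {Ω : Type*} [MeasurableSpace Ω] (S : MSSN N Ω)

/-- `V_n = ∫_{n-1}^n exp(2 ∫_u^n a(X_v) dv) σ(X_u)² du`. -/
def V (n : ℤ) (ω : Ω) : ℝ :=
  ∫ u in ((n : ℝ) - 1)..(n : ℝ),
    Real.exp (2 * ∫ v in u..(n : ℝ), S.a (S.X v ω)) * (S.sig (S.X u ω)) ^ 2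

/-- `b_n = V_n^{1/2} ξ_n`. -/
def b (n : ℤ) (ω : Ω) : ℝ := Real.sqrt (S.V n ω) * S.ξ n ω

/-- `Φ_n = Φ(n-1, n)`. -/
def Phin (n : ℤ) (ω : Ω) : ℝ := S.toMSS.Phi ((n : ℝ) - 1) (n : ℝ) ω

/-- `Π_n = Φ_1 Φ_0 ⋯ Φ_{2-n}` (with `Π_0 = 1`). -/
def Pi (n : ℕ) (ω : Ω) : ℝ := ∏ k ∈ Finset.range n, S.Phin (1 - k) ω

/-- The partial sum `R_1^n = ∑_{k=0}^{n-1} Π_k b_{1-k}` (with `R_1^0 = 0`). -/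
def R1part (n : ℕ) (ω : Ω) : ℝ := ∑ k ∈ Finset.range n, S.Pi k ω * S.b (1 - k) ω

/-- `R_1 = ∑_{k=0}^∞ Φ_1 Φ_0 ⋯ Φ_{2-k} b_{1-k}`, the stationary solution at time 1. -/
def R1 (ω : Ω) : ℝ := ∑' k : ℕ, S.Pi k ω * S.b (1 - k) ω

/-- `ν`, the law of `R_1` under `P_μ`: the stationary law of the Markov-switching
diffusion `dY_t = a(X_t) Y_t dt + σ(X_t) dW_t`. -/
def ν : Measure ℝ := S.P.map S.R1

end MSSN

/-- `m` is a median of `Z` conditionally on the event `B`: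
`P(Z ≤ m | B) ≥ 1/2` and `P(Z ≥ m | B) ≥ 1/2`. -/
def IsCondMedian {Ω : Type*} [MeasurableSpace Ω] (P : Measure Ω) (B : Set Ω)
    (Z : Ω → ℝ) (m : ℝ) : Prop :=
  1/2 ≤ P[|B] {ω | Z ω ≤ m} ∧ 1/2 ≤ P[|B] {ω | m ≤ Z ω}


namespace FnAux

open MeasureTheory ProbabilityTheory Filter Set
open scoped ENNReal

variable {N : ℕ} {Ω : Type*} [MeasurableSpace Ω]


def stepT (s δ u : ℝ) : ℝ := s + ⌈(u - s) / δ⌉ * δ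

lemma measurable_comp_stepT {β : Type*} [MeasurableSpace β] (f : ℝ → β) (s δ : ℝ) :
    Measurable fun u => f (stepT s δ u) := by
  have h1 : Measurable fun u : ℝ => (⌈(u - s) / δ⌉ : ℤ) :=
    Int.measurable_ceil.comp ((measurable_id.sub_const s).div_const δ)
  exact (measurable_of_countable (fun z : ℤ => f (s + z * δ))).comp h1

lemma stepT_mem (s δ u : ℝ) (hδ : 0 < δ) : stepT s δ u ∈ Set.Ico u (u + δ) := by
  have h1 : (u - s) / δ ≤ (⌈(u - s) / δ⌉ : ℝ) := Int.le_ceil _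
  have h2 : (⌈(u - s) / δ⌉ : ℝ) < (u - s) / δ + 1 := Int.ceil_lt_add_one _
  constructor
  · have := (div_le_iff₀ hδ).mp h1
    simp only [stepT]; linarith
  · have h3 : (⌈(u - s) / δ⌉ : ℝ) * δ < ((u - s) / δ + 1) * δ :=
      mul_lt_mul_of_pos_right h2 hδ
    have h4 : ((u - s) / δ + 1) * δ = (u - s) + δ := by field_simp
    simp only [stepT]; linarith

lemma eventually_stepT (S : MSS N Ω) (ω : Ω) (s u : ℝ) (δ : ℕ → ℝ) (hp : ∀ m, 0 < δ m)
    (h0 : Tendsto δ atTop (nhds 0)) :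
    ∀ᶠ m in atTop, S.X (stepT s (δ m) u) ω = S.X u ω := by
  obtain ⟨ε, hε, hconst⟩ := S.hX_rightcont ω u
  filter_upwards [h0.eventually (Iio_mem_nhds hε)] with m hm
  have h := stepT_mem s (δ m) u (hp m)
  have hm' : δ m < ε := hm
  exact hconst _ ⟨h.1, h.2.trans_le (by linarith)⟩

def J (S : MSS N Ω) (s t : ℝ) (ω : Ω) : ℝ := ∫ u in s..t, S.a (S.X u ω)

def gridV (S : MSS N Ω) (s δ : ℝ) (m : ℕ) (ω : Ω) : Fin (m + 1) → Fin N :=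
  fun r => S.X (s + ((r : ℕ) + 1 : ℝ) * δ) ω

def ridx (s δ : ℝ) (m : ℕ) (u : ℝ) : Fin (m + 1) :=
  if h : (⌈(u - s) / δ⌉ - 1).toNat < m + 1 then ⟨_, h⟩ else 0

def phiF (S : MSS N Ω) (s t : ℝ) (m : ℕ) (g : Fin (m + 1) → Fin N) : ℝ :=
  ∫ u in s..t, S.a (g (ridx s ((t - s) / (m + 1)) m u))

def Ym (S : MSS N Ω) (s t : ℝ) (m : ℕ) (ω : Ω) : ℝ :=
  phiF S s t m (gridV S s ((t - s) / (m + 1)) m ω)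

lemma Ym_eq (S : MSS N Ω) {s t : ℝ} (hst : s < t) (m : ℕ) (ω : Ω) :
    Ym S s t m ω = ∫ u in s..t, S.a (S.X (stepT s ((t - s) / (m + 1)) u) ω) := by
  have h1 : 0 < t - s := sub_pos.2 hst
  set δ := (t - s) / (m + 1 : ℝ) with hδdef
  have hδ : 0 < δ := by positivity
  unfold Ym phiF
  rw [intervalIntegral.integral_of_le hst.le, intervalIntegral.integral_of_le hst.le]
  refine setIntegral_congr_fun measurableSet_Ioc fun u hu => ?_
  obtain ⟨hus, hut⟩ := hu
  have hpos : 0 < (u - s) / δ := div_pos (sub_pos.2 hus) hδ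
  have hc1 : 1 ≤ ⌈(u - s) / δ⌉ := Int.ceil_pos.2 hpos
  have hcle : ⌈(u - s) / δ⌉ ≤ (m + 1 : ℤ) := by
    apply Int.ceil_le.2
    push_cast
    rw [div_le_iff₀ hδ]
    have : ((m : ℝ) + 1) * δ = t - s := by rw [hδdef]; field_simp
    linarith
  have hlt : (⌈(u - s) / δ⌉ - 1).toNat < m + 1 := by omega
  rw [ridx, dif_pos hlt]
  simp only [gridV]
  rw [← hδdef]
  have h5 : (((⌈(u - s) / δ⌉ - 1).toNat : ℤ) : ℝ) = (⌈(u - s) / δ⌉ : ℝ) - 1 := by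
    rw [Int.toNat_of_nonneg (by omega)]; push_cast; ring
  have h6 : (((⌈(u - s) / δ⌉ - 1).toNat : ℕ) : ℝ) = (⌈(u - s) / δ⌉ : ℝ) - 1 := by
    exact_mod_cast h5
  suffices h : s + ((((⌈(u - s) / δ⌉ - 1).toNat : ℕ) : ℝ) + 1) * δ = stepT s δ u by rw [h]
  rw [stepT, h6]; ring

def Cb (S : MSS N Ω) : ℝ := ∑ i, |S.a i|

lemma abs_a_le (S : MSS N Ω) (x : Fin N) : |S.a x| ≤ Cb S :=
  Finset.single_le_sum (f := fun i => |S.a i|) (fun i _ => abs_nonneg _) (Finset.mem_univ x)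

lemma tendsto_Ym (S : MSS N Ω) {s t : ℝ} (hst : s < t) (ω : Ω) :
    Tendsto (fun m => Ym S s t m ω) atTop (nhds (J S s t ω)) := by
  have h1 : 0 < t - s := sub_pos.2 hst
  have hδpos : ∀ m : ℕ, 0 < (t - s) / (m + 1 : ℝ) := fun m => by positivity
  have hδ0 : Tendsto (fun m : ℕ => (t - s) / (m + 1 : ℝ)) atTop (nhds 0) := by
    have := tendsto_one_div_add_atTop_nhds_zero_nat (𝕜 := ℝ)
    have h2 := this.const_mul (t - s)
    simp only [mul_one_div] at h2
    simpa using h2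
  have hYm : ∀ m, Ym S s t m ω
      = ∫ u in Ioc s t, S.a (S.X (stepT s ((t - s) / (m + 1)) u) ω) := by
    intro m; rw [Ym_eq S hst, intervalIntegral.integral_of_le hst.le]
  simp only [hYm, J, intervalIntegral.integral_of_le hst.le]
  apply MeasureTheory.tendsto_integral_of_dominated_convergence (bound := fun _ => Cb S)
  · exact fun m => (measurable_comp_stepT (fun x => S.a (S.X x ω)) s _).aestronglyMeasurable
  · exact integrableOn_const measure_Ioc_lt_top.ne
  · intro m
    filter_upwards with u
    rw [Real.norm_eq_abs]; exact abs_a_le S _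
  · filter_upwards with u
    apply Tendsto.congr' _ (tendsto_const_nhds)
    filter_upwards [eventually_stepT S ω s u _ hδpos hδ0] with m hm
    rw [hm]

lemma measurable_path (S : MSS N Ω) (ω : Ω) : Measurable fun u => S.a (S.X u ω) := by
  have hδpos : ∀ m : ℕ, 0 < (1 : ℝ) / (m + 1 : ℝ) := fun m => by positivity
  apply measurable_of_tendsto_metrizable' atTop
    (fun m : ℕ => measurable_comp_stepT (fun x => S.a (S.X x ω)) 0 (1 / (m + 1)))
  rw [tendsto_pi_nhds]
  intro u
  apply Tendsto.congr' _ (tendsto_const_nhds)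
  filter_upwards [eventually_stepT S ω 0 u _ hδpos (by simpa using tendsto_one_div_add_atTop_nhds_zero_nat (𝕜 := ℝ))] with m hm
  rw [hm]

lemma intervalIntegrable_path (S : MSS N Ω) (ω : Ω) (s t : ℝ) :
    IntervalIntegrable (fun u => S.a (S.X u ω)) MeasureTheory.volume s t := by
  rw [intervalIntegrable_iff]
  refine Integrable.mono' (g := fun _ => Cb S) (integrableOn_const measure_Ioc_lt_top.ne)
    ((measurable_path S ω).aestronglyMeasurable) ?_
  filter_upwards with u
  rw [Real.norm_eq_abs]; exact abs_a_le S _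

lemma measurable_Ym (S : MSS N Ω) (s t : ℝ) (m : ℕ) : Measurable (Ym S s t m) := by
  have h1 : Measurable (gridV S s ((t - s) / (m + 1)) m) :=
    measurable_pi_lambda _ fun r => S.hX_meas _
  exact (measurable_of_countable (phiF S s t m)).comp h1

lemma measurable_J (S : MSS N Ω) {s t : ℝ} (hst : s < t) : Measurable (J S s t) := by
  apply measurable_of_tendsto_metrizable' atTop (fun m => measurable_Ym S s t m)
  rw [tendsto_pi_nhds]
  exact fun ω => tendsto_Ym S hst ω

lemma abs_J_le (S : MSS N Ω) (ω : Ω) (s t : ℝ) : |J S s t ω| ≤ Cb S * |t - s| := by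
  have := intervalIntegral.norm_integral_le_of_norm_le_const
    (C := Cb S) (f := fun u => S.a (S.X u ω)) (a := s) (b := t) ?_
  · simpa [J, Real.norm_eq_abs, abs_sub_comm] using this
  · intro x _; rw [Real.norm_eq_abs]; exact abs_a_le S _

lemma J_add (S : MSS N Ω) (ω : Ω) (r s t : ℝ) : J S r s ω + J S s t ω = J S r t ω :=
  intervalIntegral.integral_add_adjacent_intervals (intervalIntegrable_path S ω r s)
    (intervalIntegrable_path S ω s t)


def Fσ (S : MSS N Ω) (s : ℝ) : MeasurableSpace Ω :=
  ⨆ u ∈ Set.Iic s, MeasurableSpace.comap (S.X u) ⊤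

lemma measurableSet_eqX (S : MSS N Ω) (t : ℝ) (i : Fin N) :
    MeasurableSet {ω | S.X t ω = i} :=
  S.hX_meas t (MeasurableSet.of_discrete (s := {i}))

lemma Fσ_le (S : MSS N Ω) (s : ℝ) : Fσ S s ≤ ‹MeasurableSpace Ω› := by
  refine iSup₂_le fun u _ => ?_
  rintro A ⟨B, -, rfl⟩
  exact S.hX_meas u .of_discrete

lemma Fσ_mono (S : MSS N Ω) {s t : ℝ} (h : s ≤ t) : Fσ S s ≤ Fσ S t :=
  iSup₂_le fun u hu => le_iSup₂ (f := fun u (_ : u ∈ Set.Iic t) => MeasurableSpace.comap (S.X u) ⊤) u (le_trans hu h)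

lemma measurableSet_Fσ (S : MSS N Ω) {u s : ℝ} (h : u ≤ s) (i : Fin N) :
    MeasurableSet[Fσ S s] {ω | S.X u ω = i} := by
  have h2 : MeasurableSpace.comap (S.X u) ⊤ ≤ Fσ S s :=
    le_iSup₂ (f := fun u (_ : u ∈ Set.Iic s) => MeasurableSpace.comap (S.X u) ⊤) u h
  exact h2 _ ⟨{i}, trivial, rfl⟩

/-- the transition matrix -/
def Pmat (S : MSS N Ω) (d : ℝ) : Matrix (Fin N) (Fin N) ℝ :=
  NormedSpace.exp (d • (Matrix.of fun i j => S.lam i * (S.q i j - if i = j then 1 else 0)))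

lemma one_step (S : MSS N Ω) {s t : ℝ} (hst : s ≤ t) (A : Set Ω)
    (hA : MeasurableSet[Fσ S s] A) (c d : Fin N) (hAc : A ⊆ {ω | S.X s ω = c}) :
    (S.P (A ∩ {ω | S.X t ω = d})).toReal = Pmat S (t - s) c d * (S.P A).toReal := by
  haveI := S.hP
  have hm : Fσ S s ≤ _ := Fσ_le S s
  have hAm : MeasurableSet A := hm A hA
  set f : Fin N → ℝ := fun x => if x = d then 1 else 0 with hf
  have h0 : (fun ω => f (S.X t ω)) = Set.indicator {ω | S.X t ω = d} (fun _ => (1:ℝ)) := by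
    funext ω
    by_cases h : S.X t ω = d
    · simp [hf, h, Set.indicator_of_mem (show ω ∈ {ω | S.X t ω = d} from h)]
    · simp [hf, h, Set.indicator_of_notMem (show ω ∉ {ω | S.X t ω = d} from h)]
  have hint : Integrable (fun ω => f (S.X t ω)) S.P := by
    rw [h0]; exact (integrable_const 1).indicator (measurableSet_eqX S t d)
  have h1 : ∫ ω in A, f (S.X t ω) ∂S.P = (S.P (A ∩ {ω | S.X t ω = d})).toReal := by
    rw [h0, setIntegral_indicator (measurableSet_eqX S t d), setIntegral_const]
    simp
    rfl
  have h2 := setIntegral_condExp hm hint hA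
  have h3 := S.hX_markov s t hst f
  have h4 : ∫ ω in A, (S.P[(fun ω => f (S.X t ω))|Fσ S s]) ω ∂S.P
      = ∫ ω in A, (∑ j, Pmat S (t - s) (S.X s ω) j * f j) ∂S.P :=
    setIntegral_congr_ae hAm (h3.mono fun ω h _ => h)
  have h5 : ∀ ω, (∑ j, Pmat S (t - s) (S.X s ω) j * f j) = Pmat S (t - s) (S.X s ω) d := by
    intro ω
    simp [hf, mul_ite, mul_one, mul_zero, Finset.sum_ite_eq']
  have h6 : ∫ ω in A, Pmat S (t - s) (S.X s ω) d ∂S.P = Pmat S (t - s) c d * (S.P A).toReal := by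
    rw [setIntegral_congr_fun hAm (g := fun _ => Pmat S (t - s) c d)
      (fun ω hω => by rw [show S.X s ω = c from hAc hω]), setIntegral_const]
    simp [mul_comm]
    exact Or.inl rfl
  calc (S.P (A ∩ {ω | S.X t ω = d})).toReal
      = ∫ ω in A, f (S.X t ω) ∂S.P := h1.symm
    _ = ∫ ω in A, (S.P[(fun ω => f (S.X t ω))|Fσ S s]) ω ∂S.P := h2.symm
    _ = ∫ ω in A, (∑ j, Pmat S (t - s) (S.X s ω) j * f j) ∂S.P := h4
    _ = ∫ ω in A, Pmat S (t - s) (S.X s ω) d ∂S.P := by simp_rw [h5]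
    _ = Pmat S (t - s) c d * (S.P A).toReal := h6

def chainSet (S : MSS N Ω) (v : ℕ → ℝ) (js : ℕ → Fin N) (p : ℕ) : Set Ω :=
  ⋂ r ∈ Finset.range (p + 1), {ω | S.X (v r) ω = js r}

lemma chainSet_succ (S : MSS N Ω) (v : ℕ → ℝ) (js : ℕ → Fin N) (p : ℕ) :
    chainSet S v js (p + 1) = chainSet S v js p ∩ {ω | S.X (v (p+1)) ω = js (p+1)} := by
  rw [chainSet, Finset.range_add_one, Finset.set_biInter_insert, Set.inter_comm]
  rfl

lemma chainSet_measurable (S : MSS N Ω) (v : ℕ → ℝ) (hv : Monotone v) (js : ℕ → Fin N) (p : ℕ) :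
    MeasurableSet[Fσ S (v p)] (chainSet S v js p) := by
  apply MeasurableSet.biInter (Finset.range (p+1)).countable_toSet
  intro r hr
  simp only [Finset.coe_range, Set.mem_Iio] at hr
  exact measurableSet_Fσ S (hv (by omega)) _

lemma chainSet_subset (S : MSS N Ω) (v : ℕ → ℝ) (js : ℕ → Fin N) (p : ℕ) :
    chainSet S v js p ⊆ {ω | S.X (v p) ω = js p} :=
  Set.biInter_subset_of_mem (by simp : p ∈ Finset.range (p+1))

lemma chain (S : MSS N Ω) (v : ℕ → ℝ) (hv : Monotone v) (js : ℕ → Fin N) (p : ℕ)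
    (A : Set Ω) (hA : MeasurableSet[Fσ S (v 0)] A) (hAc : A ⊆ {ω | S.X (v 0) ω = js 0}) :
    (S.P (A ∩ chainSet S v js p)).toReal * S.μ (js 0)
      = (S.P A).toReal * (S.P (chainSet S v js p)).toReal := by
  haveI := S.hP
  induction p with
  | zero =>
    have hc : chainSet S v js 0 = {ω | S.X (v 0) ω = js 0} := by
      simp [chainSet]
    rw [hc, Set.inter_eq_self_of_subset_left hAc, S.hX_marginal (v 0) (js 0),
      ENNReal.toReal_ofReal (S.hμ_pos _).le]
  | succ p ih =>
    have hCm : MeasurableSet[Fσ S (v p)] (chainSet S v js p) :=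
      chainSet_measurable S v hv js p
    have hCc := chainSet_subset S v js p
    have hACm : MeasurableSet[Fσ S (v p)] (A ∩ chainSet S v js p) :=
      MeasurableSet.inter (Fσ_mono S (hv (Nat.zero_le p)) A hA) hCm
    have h1 := one_step S (hv (Nat.le_succ p)) (A ∩ chainSet S v js p) hACm (js p) (js (p+1))
      (Set.inter_subset_right.trans hCc)
    have h2 := one_step S (hv (Nat.le_succ p)) (chainSet S v js p) hCm (js p) (js (p+1)) hCc
    rw [chainSet_succ, ← Set.inter_assoc, h1, h2, mul_assoc, ih]
    ring

lemma chain_shift (S : MSS N Ω) (v : ℕ → ℝ) (h : ℝ) (js : ℕ → Fin N) (p : ℕ) :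
    S.P (⋂ r ∈ Finset.range (p+1), {ω | S.X (v r + h) ω = js r}) = S.P (chainSet S v js p) := by
  have hst := S.hX_stationary h (p+1) (fun r : Fin (p+1) => v r) (fun r => js r)
  have e1 : {ω | ∀ k : Fin (p+1), S.X (v k + h) ω = js k}
      = ⋂ r ∈ Finset.range (p+1), {ω | S.X (v r + h) ω = js r} := by
    ext ω
    simp only [Set.mem_setOf_eq, Set.mem_iInter, Finset.mem_range]
    exact ⟨fun H r hr => H ⟨r, hr⟩, fun H k => H k k.2⟩
  have e2 : {ω | ∀ k : Fin (p+1), S.X (v k) ω = js k} = chainSet S v js p := by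
    ext ω
    simp only [chainSet, Set.mem_setOf_eq, Set.mem_iInter, Finset.mem_range]
    exact ⟨fun H r hr => H ⟨r, hr⟩, fun H k => H k k.2⟩
  rw [← e1, ← e2]
  exact hst

lemma measurableSet_gridV_eq (S : MSS N Ω) (b δ : ℝ) (m : ℕ) (g : Fin (m+1) → Fin N) :
    MeasurableSet {ω | gridV S b δ m ω = g} := by
  have h : {ω | gridV S b δ m ω = g}
      = ⋂ r : Fin (m+1), {ω | S.X (b + ((r:ℕ)+1)*δ) ω = g r} := by
    ext ω; simp [gridV, funext_iff]
  rw [h]; exact MeasurableSet.iInter fun r => measurableSet_eqX S _ _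

lemma measurableSet_gridV_Fσ (S : MSS N Ω) {b δ s' : ℝ} (m : ℕ) (g : Fin (m+1) → Fin N)
    (h : ∀ r : Fin (m+1), b + ((r:ℕ)+1)*δ ≤ s') :
    MeasurableSet[Fσ S s'] {ω | gridV S b δ m ω = g} := by
  have he : {ω | gridV S b δ m ω = g}
      = ⋂ r : Fin (m+1), {ω | S.X (b + ((r:ℕ)+1)*δ) ω = g r} := by
    ext ω; simp [gridV, funext_iff]
  rw [he]; exact MeasurableSet.iInter fun r => measurableSet_Fσ S (h r) _

lemma gridV_last_mem (S : MSS N Ω) {b δ : ℝ} {m : ℕ} {g : Fin (m+1) → Fin N} {i' : Fin N}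
    (hg : g (Fin.last m) = i') {ω : Ω} (h : gridV S b δ m ω = g) :
    S.X (b + ((m:ℝ)+1)*δ) ω = i' := by
  have h2 := congrFun h (Fin.last m)
  simpa [gridV, Fin.val_last, hg] using h2

lemma chainSet_eq (S : MSS N Ω) (m : ℕ) (v : ℕ → ℝ) (js : ℕ → Fin N) (b δ : ℝ)
    (k' : Fin N) (g : Fin (m+1) → Fin N)
    (hv : ∀ r, r ≤ m + 1 → v r = b + (r : ℝ) * δ)
    (hjs0 : js 0 = k') (hjsr : ∀ r : Fin (m+1), js ((r : ℕ) + 1) = g r) :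
    chainSet S v js (m+1) = {ω | S.X b ω = k'} ∩ {ω | gridV S b δ m ω = g} := by
  ext ω
  simp only [chainSet, Set.mem_iInter, Finset.mem_range, Set.mem_inter_iff, Set.mem_setOf_eq]
  constructor
  · intro H
    constructor
    · have h0 := H 0 (by omega)
      rw [hv 0 (by omega), hjs0] at h0
      simpa using h0
    · funext r
      have h := H ((r : ℕ) + 1) (by omega)
      rw [hv _ (by omega), hjsr r] at h
      show S.X (b + (((r:ℕ):ℝ)+1)*δ) ω = g r
      push_cast at h
      exact h
  · rintro ⟨h0, hg⟩ r hr
    rw [hv r (by omega)]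
    rcases r with _ | r'
    · rw [hjs0]; simpa using h0
    · have hr' : r' < m + 1 := by omega
      rw [hjsr ⟨r', hr'⟩]
      have h2 := congrFun hg ⟨r', hr'⟩
      simp only [gridV] at h2
      push_cast
      exact h2

def VA (S : MSS N Ω) (n m : ℕ) : Ω → (Fin (m+1) → Fin N) :=
  gridV S 0 (((n:ℝ) - 0) / ((m:ℝ) + 1)) m

def VB (S : MSS N Ω) (n m : ℕ) : Ω → (Fin (m+1) → Fin N) :=
  gridV S (n:ℝ) (((n:ℝ) + 1 - (n:ℝ)) / ((m:ℝ) + 1)) m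

def V0 (S : MSS N Ω) (m : ℕ) : Ω → (Fin (m+1) → Fin N) :=
  gridV S 0 (((1:ℝ) - 0) / ((m:ℝ) + 1)) m

def DD (S : MSS N Ω) (n : ℕ) (i j k : Fin N) : Set Ω :=
  {ω | S.X 0 ω = j} ∩ {ω | S.X (n:ℝ) ω = k} ∩ {ω | S.X ((n:ℝ)+1) ω = i}

def A0 (S : MSS N Ω) (n : ℕ) (j k : Fin N) : Set Ω :=
  {ω | S.X 0 ω = j} ∩ {ω | S.X (n:ℝ) ω = k}

def B0 (S : MSS N Ω) (i k : Fin N) : Set Ω :=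
  {ω | S.X 0 ω = k} ∩ {ω | S.X 1 ω = i}

lemma term_id (S : MSS N Ω) (n m : ℕ) (hn : 1 ≤ n) (i j k : Fin N)
    (g₁ g₂ : Fin (m+1) → Fin N) :
    ENNReal.ofReal (S.μ k)
        * S.P (DD S n i j k ∩ {ω | VB S n m ω = g₂} ∩ {ω | VA S n m ω = g₁})
      = S.P (B0 S i k ∩ {ω | V0 S m ω = g₂})
        * S.P (A0 S n j k ∩ {ω | VA S n m ω = g₁}) := by
  haveI := S.hP
  set δA : ℝ := ((n:ℝ) - 0) / ((m:ℝ) + 1) with hδA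
  set δB : ℝ := ((n:ℝ) + 1 - (n:ℝ)) / ((m:ℝ) + 1) with hδB
  set δ0 : ℝ := ((1:ℝ) - 0) / ((m:ℝ) + 1) with hδ0
  have hδB0 : δB = δ0 := by rw [hδB, hδ0]; congr 1; ring
  have hnpos : (0:ℝ) < (n:ℝ) := by exact_mod_cast hn
  have hA_last : (0:ℝ) + ((m:ℝ)+1)*δA = (n:ℝ) := by
    rw [hδA]; field_simp; ring
  have hB_last : (n:ℝ) + ((m:ℝ)+1)*δB = (n:ℝ)+1 := by
    rw [hδB]; field_simp; ring
  have h0_last : (0:ℝ) + ((m:ℝ)+1)*δ0 = 1 := by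
    rw [hδ0]; field_simp; ring
  by_cases hg1 : g₁ (Fin.last m) = k
  case neg =>
    have e1 : DD S n i j k ∩ {ω | VB S n m ω = g₂} ∩ {ω | VA S n m ω = g₁} = ∅ := by
      rw [Set.eq_empty_iff_forall_notMem]
      rintro ω ⟨⟨⟨⟨-, hnk⟩, -⟩, -⟩, hva⟩
      have hx := gridV_last_mem S rfl hva
      rw [hA_last] at hx
      exact hg1 (hx.symm.trans hnk)
    have e2 : A0 S n j k ∩ {ω | VA S n m ω = g₁} = ∅ := by
      rw [Set.eq_empty_iff_forall_notMem]
      rintro ω ⟨⟨-, hnk⟩, hva⟩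
      have hx := gridV_last_mem S rfl hva
      rw [hA_last] at hx
      exact hg1 (hx.symm.trans hnk)
    rw [e1, e2]; simp
  case pos =>
  by_cases hg2 : g₂ (Fin.last m) = i
  case neg =>
    have e1 : DD S n i j k ∩ {ω | VB S n m ω = g₂} ∩ {ω | VA S n m ω = g₁} = ∅ := by
      rw [Set.eq_empty_iff_forall_notMem]
      rintro ω ⟨⟨⟨-, hn1⟩, hvb⟩, -⟩
      have hx := gridV_last_mem S rfl hvb
      rw [hB_last] at hx
      exact hg2 (hx.symm.trans hn1)
    have e2 : B0 S i k ∩ {ω | V0 S m ω = g₂} = ∅ := by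
      rw [Set.eq_empty_iff_forall_notMem]
      rintro ω ⟨⟨-, h1i⟩, hv0⟩
      have hx := gridV_last_mem S rfl hv0
      rw [h0_last] at hx
      exact hg2 (hx.symm.trans h1i)
    rw [e1, e2]; simp
  case pos =>
  -- main case
  set w : ℕ → ℝ := fun r => ((min r (m+1) : ℕ) : ℝ) * δB with hw
  set v : ℕ → ℝ := fun r => w r + (n:ℝ) with hvdef
  set js : ℕ → Fin N := fun r => Nat.casesOn r k (fun r' => g₂ ⟨min r' m, by omega⟩) with hjs
  have hδBpos : (0:ℝ) ≤ δB := by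
    rw [hδB, show (n:ℝ)+1-(n:ℝ) = 1 by ring]; positivity
  have hδApos : (0:ℝ) ≤ δA := by
    rw [hδA, show (n:ℝ)-0 = (n:ℝ) by ring]; positivity
  have hvmono : Monotone v := by
    intro x y hxy
    have h1 : ((min x (m+1) : ℕ) : ℝ) ≤ ((min y (m+1) : ℕ) : ℝ) := by
      exact_mod_cast min_le_min hxy (le_refl (m+1))
    have h2 := mul_le_mul_of_nonneg_right h1 hδBpos
    show ((min x (m+1) : ℕ) : ℝ) * δB + (n:ℝ) ≤ ((min y (m+1) : ℕ) : ℝ) * δB + (n:ℝ)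
    linarith
  have hv0 : v 0 = (n:ℝ) := by
    show ((min 0 (m+1) : ℕ) : ℝ) * δB + (n:ℝ) = (n:ℝ)
    rw [Nat.zero_min]
    simp
  have hvr : ∀ r, r ≤ m + 1 → v r = (n:ℝ) + (r : ℝ) * δB := by
    intro r hr
    show ((min r (m+1) : ℕ) : ℝ) * δB + (n:ℝ) = (n:ℝ) + (r : ℝ) * δB
    rw [min_eq_left hr]
    ring
  have hjs0 : js 0 = k := rfl
  have hjsr : ∀ r : Fin (m+1), js ((r : ℕ) + 1) = g₂ r := by
    intro r
    show g₂ ⟨min (r:ℕ) m, by omega⟩ = g₂ r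
    congr 1
    exact Fin.ext (by simp [min_eq_left (Nat.lt_succ_iff.mp r.isLt)])
  have hCS : chainSet S v js (m+1) = {ω | S.X (n:ℝ) ω = k} ∩ {ω | VB S n m ω = g₂} :=
    chainSet_eq S m v js (n:ℝ) δB k g₂ hvr hjs0 hjsr
  set A : Set Ω := {ω | S.X 0 ω = j} ∩ {ω | VA S n m ω = g₁} with hAdef
  have hAmeas : MeasurableSet[Fσ S (v 0)] A := by
    rw [hv0]
    apply MeasurableSet.inter (measurableSet_Fσ S hnpos.le j)
    apply measurableSet_gridV_Fσ
    intro r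
    have h1 : ((r:ℕ):ℝ) + 1 ≤ (m:ℝ) + 1 := by
      have h2 : ((r:ℕ):ℝ) ≤ (m:ℝ) := by exact_mod_cast Nat.lt_succ_iff.mp r.isLt
      linarith
    nlinarith [hA_last, hδApos, h1]
  have hAc : A ⊆ {ω | S.X (v 0) ω = js 0} := by
    rintro ω ⟨-, hva⟩
    show S.X (v 0) ω = js 0
    rw [hv0, hjs0, ← hA_last]
    exact gridV_last_mem S hg1 hva
  have hchain := chain S v hvmono js (m+1) A hAmeas hAc
  have hshift : S.P (chainSet S v js (m+1)) = S.P (chainSet S w js (m+1)) := by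
    have := chain_shift S w (n:ℝ) js (m+1)
    rw [← this]
    rfl
  have hwr : ∀ r, r ≤ m + 1 → w r = (0:ℝ) + (r : ℝ) * δ0 := by
    intro r hr
    show ((min r (m+1) : ℕ) : ℝ) * δB = (0:ℝ) + (r : ℝ) * δ0
    rw [min_eq_left hr, hδB0]
    ring
  have hCS0 : chainSet S w js (m+1) = {ω | S.X 0 ω = k} ∩ {ω | V0 S m ω = g₂} :=
    chainSet_eq S m w js 0 δ0 k g₂ hwr hjs0 hjsr
  -- identify the sets
  have himpB : ∀ ω, VB S n m ω = g₂ → S.X ((n:ℝ)+1) ω = i := by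
    intro ω h
    rw [← hB_last]
    exact gridV_last_mem S hg2 h
  have himpA : ∀ ω, VA S n m ω = g₁ → S.X (n:ℝ) ω = k := by
    intro ω h
    rw [← hA_last]
    exact gridV_last_mem S hg1 h
  have himp0 : ∀ ω, V0 S m ω = g₂ → S.X 1 ω = i := by
    intro ω h
    rw [← h0_last]
    exact gridV_last_mem S hg2 h
  have E1 : A ∩ chainSet S v js (m+1)
      = DD S n i j k ∩ {ω | VB S n m ω = g₂} ∩ {ω | VA S n m ω = g₁} := by
    rw [hCS]
    ext ω
    simp only [hAdef, DD, Set.mem_inter_iff, Set.mem_setOf_eq]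
    constructor
    · rintro ⟨⟨h0j, hva⟩, hnk, hvb⟩
      exact ⟨⟨⟨⟨h0j, hnk⟩, himpB ω hvb⟩, hvb⟩, hva⟩
    · rintro ⟨⟨⟨⟨h0j, hnk⟩, -⟩, hvb⟩, hva⟩
      exact ⟨⟨h0j, hva⟩, hnk, hvb⟩
  have E2 : chainSet S w js (m+1) = B0 S i k ∩ {ω | V0 S m ω = g₂} := by
    rw [hCS0]
    ext ω
    simp only [B0, Set.mem_inter_iff, Set.mem_setOf_eq]
    constructor
    · rintro ⟨h0k, hv0'⟩
      exact ⟨⟨h0k, himp0 ω hv0'⟩, hv0'⟩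
    · rintro ⟨⟨h0k, -⟩, hv0'⟩
      exact ⟨h0k, hv0'⟩
  have E3 : A = A0 S n j k ∩ {ω | VA S n m ω = g₁} := by
    ext ω
    simp only [hAdef, A0, Set.mem_inter_iff, Set.mem_setOf_eq]
    constructor
    · rintro ⟨h0j, hva⟩
      exact ⟨⟨h0j, himpA ω hva⟩, hva⟩
    · rintro ⟨⟨h0j, -⟩, hva⟩
      exact ⟨h0j, hva⟩
  rw [← E1, ← E2, ← E3, ← hshift]
  -- now reduce to hchain via toReal
  have hfin1 : S.P (A ∩ chainSet S v js (m+1)) ≠ ⊤ := measure_ne_top _ _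
  have hfin2 : S.P (chainSet S v js (m+1)) ≠ ⊤ := measure_ne_top _ _
  have hfin3 : S.P A ≠ ⊤ := measure_ne_top _ _
  apply (ENNReal.toReal_eq_toReal_iff' (by finiteness) (by finiteness)).mp
  rw [ENNReal.toReal_mul, ENNReal.toReal_mul, ENNReal.toReal_ofReal (S.hμ_pos k).le]
  have : S.μ (js 0) = S.μ k := by rw [hjs0]
  rw [this] at hchain
  linarith [hchain]

lemma lintegral_comp_finite {γ : Type*} [Fintype γ] {α : Type*} [MeasurableSpace α]
    (ρ : Measure α) (W : α → γ) (hW : ∀ v, MeasurableSet {x | W x = v}) (F : γ → ℝ≥0∞) :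
    ∫⁻ x, F (W x) ∂ρ = ∑ v, F v * ρ {x | W x = v} := by
  have h : ∀ x, F (W x) = ∑ v, Set.indicator {x | W x = v} (fun _ => F v) x := by
    intro x
    rw [Finset.sum_eq_single (W x)]
    · rw [Set.indicator_of_mem (by exact rfl)]
    · intro v _ hv
      rw [Set.indicator_of_notMem (by simpa using fun h => hv h.symm)]
    · intro h; exact absurd (Finset.mem_univ _) h
  simp_rw [h]
  rw [lintegral_finset_sum _ (fun v _ => measurable_const.indicator (hW v))]
  congr 1
  funext v
  rw [lintegral_indicator (hW v), setLIntegral_const]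

lemma phiF_shift (S : MSS N Ω) (s t h : ℝ) (m : ℕ) (g : Fin (m+1) → Fin N) :
    phiF S (s + h) (t + h) m g = phiF S s t m g := by
  unfold phiF
  rw [show (t + h - (s + h)) = t - s by ring]
  rw [← intervalIntegral.integral_comp_add_right (a := s) (b := t) (d := h)
    (f := fun u => S.a (g (ridx (s+h) ((t-s)/(m+1)) m u)))]
  apply intervalIntegral.integral_congr
  intro u _
  show S.a (g (ridx (s+h) ((t-s)/((m:ℝ)+1)) m (u+h))) = S.a (g (ridx s ((t-s)/((m:ℝ)+1)) m u))
  rw [show ridx (s+h) ((t-s)/((m:ℝ)+1)) m (u+h) = ridx s ((t-s)/((m:ℝ)+1)) m u from by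
    unfold ridx; rw [show u + h - (s + h) = u - s by ring]]

lemma measurableSet_VA_eq (S : MSS N Ω) (n m : ℕ) (g : Fin (m+1) → Fin N) :
    MeasurableSet {ω | VA S n m ω = g} := measurableSet_gridV_eq S _ _ _ _

lemma measurableSet_VB_eq (S : MSS N Ω) (n m : ℕ) (g : Fin (m+1) → Fin N) :
    MeasurableSet {ω | VB S n m ω = g} := measurableSet_gridV_eq S _ _ _ _

lemma measurableSet_V0_eq (S : MSS N Ω) (m : ℕ) (g : Fin (m+1) → Fin N) :
    MeasurableSet {ω | V0 S m ω = g} := measurableSet_gridV_eq S _ _ _ _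

lemma measurableSet_DD (S : MSS N Ω) (n : ℕ) (i j k : Fin N) : MeasurableSet (DD S n i j k) :=
  ((measurableSet_eqX S _ _).inter (measurableSet_eqX S _ _)).inter (measurableSet_eqX S _ _)

lemma measurableSet_A0 (S : MSS N Ω) (n : ℕ) (j k : Fin N) : MeasurableSet (A0 S n j k) :=
  (measurableSet_eqX S _ _).inter (measurableSet_eqX S _ _)

lemma measurableSet_B0 (S : MSS N Ω) (i k : Fin N) : MeasurableSet (B0 S i k) :=
  (measurableSet_eqX S _ _).inter (measurableSet_eqX S _ _)

lemma stage (S : MSS N Ω) (n m : ℕ) (hn : 1 ≤ n) (i j k : Fin N)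
    (f : ℝ × ℝ → ℝ≥0∞) :
    ENNReal.ofReal (S.μ k)
        * ∫⁻ ω in DD S n i j k, f (Ym S (n:ℝ) ((n:ℝ)+1) m ω, Ym S 0 (n:ℝ) m ω) ∂S.P
      = ∫⁻ z, f (Ym S 0 1 m z.1, Ym S 0 (n:ℝ) m z.2)
          ∂((S.P.restrict (B0 S i k)).prod (S.P.restrict (A0 S n j k))) := by
  haveI := S.hP
  have hWmeas : ∀ v : ((Fin (m+1) → Fin N) × (Fin (m+1) → Fin N)),
      MeasurableSet {ω | (VB S n m ω, VA S n m ω) = v} := by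
    intro v
    have he : {ω | (VB S n m ω, VA S n m ω) = v}
        = {ω | VB S n m ω = v.1} ∩ {ω | VA S n m ω = v.2} := by
      ext ω; simp [Prod.ext_iff]
    rw [he]
    exact (measurableSet_gridV_eq S _ _ _ _).inter (measurableSet_gridV_eq S _ _ _ _)
  have hW'meas : ∀ v : ((Fin (m+1) → Fin N) × (Fin (m+1) → Fin N)),
      MeasurableSet {z : Ω × Ω | (V0 S m z.1, VA S n m z.2) = v} := by
    intro v
    have he : {z : Ω × Ω | (V0 S m z.1, VA S n m z.2) = v}
        = {ω | V0 S m ω = v.1} ×ˢ {ω | VA S n m ω = v.2} := by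
      ext z; simp [Prod.ext_iff, Set.mem_prod]
    rw [he]
    exact (measurableSet_gridV_eq S _ _ _ _).prod (measurableSet_gridV_eq S _ _ _ _)
  have hLHS : ∫⁻ ω in DD S n i j k, f (Ym S (n:ℝ) ((n:ℝ)+1) m ω, Ym S 0 (n:ℝ) m ω) ∂S.P
      = ∑ v : ((Fin (m+1) → Fin N) × (Fin (m+1) → Fin N)),
          f (phiF S (n:ℝ) ((n:ℝ)+1) m v.1, phiF S 0 (n:ℝ) m v.2)
          * (S.P.restrict (DD S n i j k)) {ω | (VB S n m ω, VA S n m ω) = v} :=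
    lintegral_comp_finite _ (fun ω => (VB S n m ω, VA S n m ω)) hWmeas
      (fun v => f (phiF S (n:ℝ) ((n:ℝ)+1) m v.1, phiF S 0 (n:ℝ) m v.2))
  have hRHS : ∫⁻ z, f (Ym S 0 1 m z.1, Ym S 0 (n:ℝ) m z.2)
          ∂((S.P.restrict (B0 S i k)).prod (S.P.restrict (A0 S n j k)))
      = ∑ v : ((Fin (m+1) → Fin N) × (Fin (m+1) → Fin N)),
          f (phiF S 0 1 m v.1, phiF S 0 (n:ℝ) m v.2)
          * ((S.P.restrict (B0 S i k)).prod (S.P.restrict (A0 S n j k)))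
              {z : Ω × Ω | (V0 S m z.1, VA S n m z.2) = v} :=
    lintegral_comp_finite _ (fun z : Ω × Ω => (V0 S m z.1, VA S n m z.2)) hW'meas
      (fun v => f (phiF S 0 1 m v.1, phiF S 0 (n:ℝ) m v.2))
  rw [hLHS, hRHS, Finset.mul_sum]
  apply Finset.sum_congr rfl
  intro v _
  have hF : phiF S (n:ℝ) ((n:ℝ)+1) m v.1 = phiF S 0 1 m v.1 := by
    have h := phiF_shift S 0 1 (n:ℝ) m v.1
    rw [show (0:ℝ) + (n:ℝ) = (n:ℝ) by ring, show (1:ℝ) + (n:ℝ) = (n:ℝ) + 1 by ring] at h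
    exact h
  have hsetL : {ω | (VB S n m ω, VA S n m ω) = v} ∩ DD S n i j k
      = DD S n i j k ∩ {ω | VB S n m ω = v.1} ∩ {ω | VA S n m ω = v.2} := by
    ext ω; simp only [Set.mem_inter_iff, Set.mem_setOf_eq, Prod.ext_iff]; tauto
  have hsetR : {z : Ω × Ω | (V0 S m z.1, VA S n m z.2) = v}
      = {ω | V0 S m ω = v.1} ×ˢ {ω | VA S n m ω = v.2} := by
    ext z; simp [Prod.ext_iff, Set.mem_prod]
  rw [Measure.restrict_apply (hWmeas v), hsetL, hsetR, Measure.prod_prod,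
    Measure.restrict_apply (measurableSet_V0_eq S m v.1),
    Measure.restrict_apply (measurableSet_VA_eq S n m v.2),
    Set.inter_comm {ω | V0 S m ω = v.1} (B0 S i k),
    Set.inter_comm {ω | VA S n m ω = v.2} (A0 S n j k), hF]
  rw [← mul_assoc, mul_comm (ENNReal.ofReal (S.μ k)) (f (phiF S 0 1 m v.1, phiF S 0 (n:ℝ) m v.2)),
    mul_assoc]
  rw [term_id S n m hn i j k v.2 v.1]

def clampf (a : ℝ) (m : ℕ) (x : ℝ) : ℝ := max 0 (min 1 (((m:ℝ)+1) * (a - x)))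

lemma clampf_mem (a : ℝ) (m : ℕ) (x : ℝ) : clampf a m x ∈ Set.Icc (0:ℝ) 1 :=
  ⟨le_max_left _ _, max_le zero_le_one (min_le_left _ _)⟩

lemma clampf_continuous (a : ℝ) (m : ℕ) : Continuous (clampf a m) :=
  continuous_const.max (continuous_const.min (continuous_const.mul (continuous_const.sub continuous_id)))

lemma clampf_tendsto (a x : ℝ) :
    Tendsto (fun m => clampf a m x) atTop (nhds (Set.indicator (Set.Iio a) (fun _ => (1:ℝ)) x)) := by
  by_cases hx : x < a
  · rw [Set.indicator_of_mem (show x ∈ Set.Iio a from hx)]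
    apply Tendsto.congr' _ tendsto_const_nhds
    have hax : 0 < a - x := by linarith
    have hev : ∀ᶠ m : ℕ in atTop, 1 ≤ ((m:ℝ)+1) * (a - x) := by
      obtain ⟨M, hM⟩ := exists_nat_ge (1/(a-x))
      refine eventually_atTop.2 ⟨M, fun m hm => ?_⟩
      have h1 : (1/(a-x)) ≤ (m:ℝ) := le_trans hM (by exact_mod_cast hm)
      rw [div_le_iff₀ hax] at h1
      nlinarith
    filter_upwards [hev] with m hm
    show (1:ℝ) = clampf a m x
    unfold clampf
    rw [min_eq_left hm, max_eq_right zero_le_one]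
  · rw [Set.indicator_of_notMem (by simpa using hx)]
    have h0 : ∀ m, clampf a m x = 0 := by
      intro m; unfold clampf
      have h1 : ((m:ℝ)+1) * (a - x) ≤ 0 :=
        mul_nonpos_of_nonneg_of_nonpos (by positivity) (by linarith [not_lt.mp hx])
      rw [max_eq_left ((min_le_right _ _).trans h1)]
    simp_rw [h0]
    exact tendsto_const_nhds

lemma ext_of_clamps (ρ₁ ρ₂ : Measure (ℝ × ℝ)) [IsFiniteMeasure ρ₁] [IsFiniteMeasure ρ₂]
    (h : ∀ g₁ g₂ : ℝ → ℝ, Continuous g₁ → Continuous g₂ →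
      (∀ x, g₁ x ∈ Set.Icc (0:ℝ) 1) → (∀ x, g₂ x ∈ Set.Icc (0:ℝ) 1) →
      ∫⁻ p, ENNReal.ofReal (g₁ p.1 * g₂ p.2) ∂ρ₁ = ∫⁻ p, ENNReal.ofReal (g₁ p.1 * g₂ p.2) ∂ρ₂) :
    ρ₁ = ρ₂ := by
  have key : ∀ (ρ : Measure (ℝ×ℝ)), IsFiniteMeasure ρ → ∀ a b : ℝ,
      Tendsto (fun m => ∫⁻ p, ENNReal.ofReal (clampf a m p.1 * clampf b m p.2) ∂ρ) atTop
        (nhds (ρ (Set.Iio a ×ˢ Set.Iio b))) := by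
    intro ρ hρ a b
    have hrect : MeasurableSet (Set.Iio a ×ˢ Set.Iio b) :=
      measurableSet_Iio.prod measurableSet_Iio
    have hlim : ∫⁻ p, (Set.Iio a ×ˢ Set.Iio b).indicator (fun _ => (1:ℝ≥0∞)) p ∂ρ
        = ρ (Set.Iio a ×ˢ Set.Iio b) := by
      rw [lintegral_indicator hrect]
      simp
    rw [← hlim]
    have hind : ∀ p : ℝ × ℝ, (Set.Iio a ×ˢ Set.Iio b).indicator (fun _ => (1:ℝ≥0∞)) p
        = ENNReal.ofReal ((Set.Iio a).indicator (fun _ => (1:ℝ)) p.1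
            * (Set.Iio b).indicator (fun _ => (1:ℝ)) p.2) := by
      intro p
      by_cases h1 : p.1 ∈ Set.Iio a <;> by_cases h2 : p.2 ∈ Set.Iio b <;>
        simp [Set.indicator_of_mem, Set.indicator_of_notMem, h1, h2,
          Set.mem_prod, Set.indicator_apply]
    apply tendsto_lintegral_of_dominated_convergence (bound := fun _ => (1:ℝ≥0∞))
    · intro m
      exact ENNReal.measurable_ofReal.comp
        (((clampf_continuous a m).measurable.comp measurable_fst).mul
          ((clampf_continuous b m).measurable.comp measurable_snd))
    · intro m
      filter_upwards with p
      refine ENNReal.ofReal_le_one.2 ?_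
      have := clampf_mem a m p.1
      have := clampf_mem b m p.2
      nlinarith [(clampf_mem a m p.1).1, (clampf_mem a m p.1).2,
        (clampf_mem b m p.2).1, (clampf_mem b m p.2).2]
    · rw [lintegral_one]
      exact (measure_lt_top ρ _).ne
    · filter_upwards with p
      rw [hind p]
      exact (ENNReal.continuous_ofReal.tendsto _).comp
        ((clampf_tendsto a p.1).mul (clampf_tendsto b p.2))
  have hrect : ∀ a b : ℝ, ρ₁ (Set.Iio a ×ˢ Set.Iio b) = ρ₂ (Set.Iio a ×ˢ Set.Iio b) := by
    intro a b
    refine tendsto_nhds_unique (Tendsto.congr (fun m => ?_) (key ρ₁ inferInstance a b))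
      (key ρ₂ inferInstance a b)
    exact h (clampf a m) (clampf b m) (clampf_continuous a m) (clampf_continuous b m)
      (clampf_mem a m) (clampf_mem b m)
  have hspan : IsCountablySpanning (Set.range (Set.Iio : ℝ → Set ℝ)) := by
    refine ⟨fun n => Set.Iio n, fun n => ⟨n, rfl⟩, ?_⟩
    ext x
    simp only [Set.mem_iUnion, Set.mem_Iio, Set.mem_univ, iff_true]
    exact exists_nat_gt x
  have hgen : (inferInstance : MeasurableSpace (ℝ × ℝ))
      = MeasurableSpace.generateFrom
          (Set.image2 (· ×ˢ ·) (Set.range Set.Iio) (Set.range Set.Iio)) := by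
    rw [← generateFrom_prod_eq hspan hspan, ← borel_eq_generateFrom_Iio]
  have hpi : IsPiSystem (Set.image2 (· ×ˢ ·) (Set.range (Set.Iio : ℝ → Set ℝ))
      (Set.range (Set.Iio : ℝ → Set ℝ))) := by
    rintro _ ⟨_, ⟨a1, rfl⟩, _, ⟨b1, rfl⟩, rfl⟩ _ ⟨_, ⟨a2, rfl⟩, _, ⟨b2, rfl⟩, rfl⟩ -
    rw [Set.prod_inter_prod, Set.Iio_inter_Iio, Set.Iio_inter_Iio]
    exact ⟨_, ⟨min a1 a2, rfl⟩, _, ⟨min b1 b2, rfl⟩, rfl⟩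
  apply MeasureTheory.ext_of_generate_finite _ hgen hpi
  · rintro _ ⟨_, ⟨a, rfl⟩, _, ⟨b, rfl⟩, rfl⟩
    exact hrect a b
  · have h1 := h (fun _ => 1) (fun _ => 1) continuous_const continuous_const
      (fun _ => ⟨zero_le_one, le_refl 1⟩) (fun _ => ⟨zero_le_one, le_refl 1⟩)
    simpa using h1

lemma pair_law (S : MSS N Ω) (n : ℕ) (hn : 1 ≤ n) (i j k : Fin N) :
    ENNReal.ofReal (S.μ k)
        • Measure.map (fun ω => (J S (n:ℝ) ((n:ℝ)+1) ω, J S 0 (n:ℝ) ω))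
            (S.P.restrict (DD S n i j k))
      = (Measure.map (J S 0 1) (S.P.restrict (B0 S i k))).prod
          (Measure.map (J S 0 (n:ℝ)) (S.P.restrict (A0 S n j k))) := by
  haveI := S.hP
  have h0n : (0:ℝ) < (n:ℝ) := by exact_mod_cast hn
  have hnn1 : (n:ℝ) < (n:ℝ)+1 := by linarith
  have hJB := measurable_J S hnn1
  have hJA := measurable_J S h0n
  have hJ0 := measurable_J S one_pos
  have hpair : Measurable fun ω => (J S (n:ℝ) ((n:ℝ)+1) ω, J S 0 (n:ℝ) ω) := hJB.prodMk hJA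
  haveI i1 : IsFiniteMeasure (Measure.map (J S 0 1) (S.P.restrict (B0 S i k))) :=
    Measure.isFiniteMeasure_map _ _
  haveI i2 : IsFiniteMeasure (Measure.map (J S 0 (n:ℝ)) (S.P.restrict (A0 S n j k))) :=
    Measure.isFiniteMeasure_map _ _
  haveI i3 : IsFiniteMeasure (Measure.map (fun ω => (J S (n:ℝ) ((n:ℝ)+1) ω, J S 0 (n:ℝ) ω))
      (S.P.restrict (DD S n i j k))) := Measure.isFiniteMeasure_map _ _
  haveI i4 : IsFiniteMeasure (ENNReal.ofReal (S.μ k)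
      • Measure.map (fun ω => (J S (n:ℝ) ((n:ℝ)+1) ω, J S 0 (n:ℝ) ω))
          (S.P.restrict (DD S n i j k))) := by
    constructor
    rw [Measure.smul_apply, smul_eq_mul]
    exact ENNReal.mul_lt_top ENNReal.ofReal_lt_top (measure_lt_top _ _)
  apply ext_of_clamps
  intro g₁ g₂ hg₁ hg₂ hb₁ hb₂
  have hGmeas : Measurable fun p : ℝ × ℝ => ENNReal.ofReal (g₁ p.1 * g₂ p.2) :=
    ENNReal.measurable_ofReal.comp
      ((hg₁.measurable.comp measurable_fst).mul (hg₂.measurable.comp measurable_snd))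
  set G : ℝ × ℝ → ℝ≥0∞ := fun p => ENNReal.ofReal (g₁ p.1 * g₂ p.2) with hGdef
  have hG1 : ∀ p, G p ≤ 1 := by
    intro p
    refine ENNReal.ofReal_le_one.2 ?_
    nlinarith [(hb₁ p.1).1, (hb₁ p.1).2, (hb₂ p.2).1, (hb₂ p.2).2]
  have hGcont : Continuous G :=
    ENNReal.continuous_ofReal.comp ((hg₁.comp continuous_fst).mul (hg₂.comp continuous_snd))
  rw [lintegral_smul_measure, lintegral_map hGmeas hpair,
    Measure.map_prod_map _ _ hJ0 hJA, lintegral_map hGmeas (hJ0.prodMap hJA)]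
  have hT1 : Tendsto (fun m => ∫⁻ ω in DD S n i j k,
        G (Ym S (n:ℝ) ((n:ℝ)+1) m ω, Ym S 0 (n:ℝ) m ω) ∂S.P) atTop
      (nhds (∫⁻ ω in DD S n i j k, G (J S (n:ℝ) ((n:ℝ)+1) ω, J S 0 (n:ℝ) ω) ∂S.P)) := by
    apply tendsto_lintegral_of_dominated_convergence (bound := fun _ => (1:ℝ≥0∞))
    · intro m
      exact hGmeas.comp ((measurable_Ym S _ _ m).prodMk (measurable_Ym S _ _ m))
    · intro m
      filter_upwards with ω
      exact hG1 _
    · rw [lintegral_one]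
      exact (measure_lt_top _ _).ne
    · filter_upwards with ω
      exact (hGcont.tendsto _).comp
        ((tendsto_Ym S hnn1 ω).prodMk_nhds (tendsto_Ym S h0n ω))
  have hT2 : Tendsto (fun m => ∫⁻ z : Ω × Ω, G (Ym S 0 1 m z.1, Ym S 0 (n:ℝ) m z.2)
          ∂((S.P.restrict (B0 S i k)).prod (S.P.restrict (A0 S n j k)))) atTop
      (nhds (∫⁻ z : Ω × Ω, G (J S 0 1 z.1, J S 0 (n:ℝ) z.2)
          ∂((S.P.restrict (B0 S i k)).prod (S.P.restrict (A0 S n j k))))) := by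
    apply tendsto_lintegral_of_dominated_convergence (bound := fun _ => (1:ℝ≥0∞))
    · intro m
      exact hGmeas.comp (((measurable_Ym S _ _ m).comp measurable_fst).prodMk
        ((measurable_Ym S _ _ m).comp measurable_snd))
    · intro m
      filter_upwards with z
      exact hG1 _
    · rw [lintegral_one]
      exact (measure_lt_top _ _).ne
    · filter_upwards with z
      exact (hGcont.tendsto _).comp
        ((tendsto_Ym S one_pos z.1).prodMk_nhds (tendsto_Ym S h0n z.2))
  have hT1' := ENNReal.Tendsto.const_mul (a := ENNReal.ofReal (S.μ k)) hT1
    (Or.inr ENNReal.ofReal_ne_top)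
  have heq : ∀ m, ENNReal.ofReal (S.μ k) * ∫⁻ ω in DD S n i j k,
        G (Ym S (n:ℝ) ((n:ℝ)+1) m ω, Ym S 0 (n:ℝ) m ω) ∂S.P
      = ∫⁻ z : Ω × Ω, G (Ym S 0 1 m z.1, Ym S 0 (n:ℝ) m z.2)
          ∂((S.P.restrict (B0 S i k)).prod (S.P.restrict (A0 S n j k))) :=
    fun m => stage S n m hn i j k G
  have := tendsto_nhds_unique (hT1'.congr heq) hT2
  convert this using 2 <;> rfl

lemma map_withDensity_comp {α β : Type*} [MeasurableSpace α] [MeasurableSpace β]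
    (μ : Measure α) (g : α → β) (hg : Measurable g) (w : β → ℝ≥0∞) (hw : Measurable w) :
    Measure.map g (μ.withDensity (fun x => w (g x))) = (Measure.map g μ).withDensity w := by
  ext s hs
  rw [Measure.map_apply hg hs, withDensity_apply _ (hg hs), withDensity_apply _ hs,
    setLIntegral_map hs hw hg]

lemma prod_withDensity' {α β : Type*} [MeasurableSpace α] [MeasurableSpace β]
    (μ : Measure α) (ν : Measure β) (w₁ : α → ℝ≥0∞) (w₂ : β → ℝ≥0∞)
    (h₁ : Measurable w₁) (h₂ : Measurable w₂)
    [SigmaFinite (μ.withDensity w₁)] [SigmaFinite (ν.withDensity w₂)] [SFinite μ] [SFinite ν] :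
    (μ.withDensity w₁).prod (ν.withDensity w₂)
      = (μ.prod ν).withDensity (fun p => w₁ p.1 * w₂ p.2) := by
  refine (Measure.prod_eq (μ := μ.withDensity w₁) (ν := ν.withDensity w₂)
    (μν := (μ.prod ν).withDensity (fun p => w₁ p.1 * w₂ p.2)) fun s t hs ht => ?_).symm.symm
  rw [withDensity_apply _ (hs.prod ht), ← Measure.prod_restrict,
    lintegral_prod_mul h₁.aemeasurable h₂.aemeasurable,
    withDensity_apply _ hs, withDensity_apply _ ht]

lemma smul_prod' {α β : Type*} [MeasurableSpace α] [MeasurableSpace β]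
    (c : ℝ≥0∞) (μ : Measure α) (ν : Measure β) [SFinite μ] [SFinite ν] :
    (c • μ).prod ν = c • (μ.prod ν) := by
  ext s hs
  rw [Measure.smul_apply, Measure.prod_apply hs, Measure.prod_apply hs,
    lintegral_smul_measure, smul_eq_mul]

lemma prod_smul' {α β : Type*} [MeasurableSpace α] [MeasurableSpace β]
    (c : ℝ≥0∞) (μ : Measure α) (ν : Measure β) [SFinite μ] [SFinite ν] :
    μ.prod (c • ν) = c • (μ.prod ν) := by
  ext s hs
  rw [Measure.smul_apply, Measure.prod_apply hs, Measure.prod_apply hs, smul_eq_mul,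
    ← lintegral_const_mul _ (measurable_measure_prodMk_left hs)]
  simp [Measure.smul_apply]

lemma map_sum_fin {α β ι : Type*} [Fintype ι] [MeasurableSpace α] [MeasurableSpace β]
    (μ : ι → Measure α) (g : α → β) (hg : Measurable g) :
    Measure.map g (∑ k, μ k) = ∑ k, Measure.map g (μ k) := by
  ext s hs
  rw [Measure.map_apply hg hs, Measure.finset_sum_apply, Measure.finset_sum_apply]
  exact Finset.sum_congr rfl fun k _ => (Measure.map_apply hg hs).symm

lemma withDensity_sum_fin {α ι : Type*} [Fintype ι] [MeasurableSpace α]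
    (μ : ι → Measure α) (w : α → ℝ≥0∞) :
    (∑ k, μ k).withDensity w = ∑ k, (μ k).withDensity w := by
  ext s hs
  have hrs : (∑ k, μ k).restrict s = ∑ k, (μ k).restrict s := by
    ext u hu
    rw [Measure.restrict_apply hu, Measure.finset_sum_apply, Measure.finset_sum_apply]
    exact Finset.sum_congr rfl fun k _ => (Measure.restrict_apply hu).symm
  rw [withDensity_apply _ hs, Measure.finset_sum_apply]
  calc ∫⁻ x in s, w x ∂(∑ k, μ k)
      = ∫⁻ x, w x ∂(∑ k, (μ k).restrict s) := by rw [← hrs]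
    _ = ∑ k, ∫⁻ x, w x ∂((μ k).restrict s) := lintegral_finset_sum_measure _ _ _
    _ = ∑ k, ((μ k).withDensity w) s :=
        Finset.sum_congr rfl fun k _ => (withDensity_apply _ hs).symm

lemma conv_dirac_zero'' (μ : Measure ℝ) : μ.conv (Measure.dirac 0) = μ := by
  ext s hs
  have hadd : Measurable fun p : ℝ × ℝ => p.1 + p.2 := measurable_add
  rw [Measure.conv, Measure.map_apply hadd hs, Measure.prod_apply (hadd hs)]
  have h1 : ∀ x : ℝ, (Measure.dirac (0:ℝ)) (Prod.mk x ⁻¹' ((fun p : ℝ × ℝ => p.1 + p.2) ⁻¹' s))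
      = s.indicator (fun _ => 1) x := by
    intro x
    have hms : MeasurableSet (Prod.mk x ⁻¹' ((fun p : ℝ × ℝ => p.1 + p.2) ⁻¹' s)) :=
      (measurable_const.add measurable_id) hs
    rw [Measure.dirac_apply' _ hms]
    by_cases hx : x ∈ s
    · rw [Set.indicator_of_mem (by simpa using hx), Set.indicator_of_mem hx]
      rfl
    · rw [Set.indicator_of_notMem (by simpa using hx), Set.indicator_of_notMem hx]
  simp_rw [h1]
  rw [lintegral_indicator hs, setLIntegral_one]

lemma hwmeas (κ : ℝ) : Measurable fun x : ℝ => ENNReal.ofReal (Real.exp (κ * x)) :=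
  ENNReal.measurable_ofReal.comp (Real.continuous_exp.measurable.comp (measurable_const_mul κ))

lemma isFiniteMeasure_expDensity (S : MSS N Ω) (κ : ℝ) {s t : ℝ} (hst : s < t) (E : Set Ω) :
    IsFiniteMeasure ((Measure.map (J S s t) (S.P.restrict E)).withDensity
      (fun x => ENNReal.ofReal (Real.exp (κ * x)))) := by
  haveI := S.hP
  constructor
  rw [withDensity_apply _ MeasurableSet.univ, Measure.restrict_univ,
    lintegral_map (hwmeas κ) (measurable_J S hst)]
  have hb : ∀ ω, ENNReal.ofReal (Real.exp (κ * J S s t ω))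
      ≤ ENNReal.ofReal (Real.exp (|κ| * (Cb S * |t - s|))) := by
    intro ω
    apply ENNReal.ofReal_le_ofReal
    apply Real.exp_le_exp.2
    calc κ * J S s t ω ≤ |κ * J S s t ω| := le_abs_self _
      _ = |κ| * |J S s t ω| := abs_mul _ _
      _ ≤ |κ| * (Cb S * |t - s|) :=
          mul_le_mul_of_nonneg_left (abs_J_le S ω s t) (abs_nonneg κ)
  calc ∫⁻ ω, ENNReal.ofReal (Real.exp (κ * J S s t ω)) ∂(S.P.restrict E)
      ≤ ∫⁻ _, ENNReal.ofReal (Real.exp (|κ| * (Cb S * |t - s|))) ∂(S.P.restrict E) :=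
        lintegral_mono hb
    _ = ENNReal.ofReal (Real.exp (|κ| * (Cb S * |t - s|))) * (S.P.restrict E) Set.univ :=
        lintegral_const _
    _ < ⊤ := ENNReal.mul_lt_top ENNReal.ofReal_lt_top (measure_lt_top _ _)

lemma condP_restrict (S : MSS N Ω) (k : Fin N) (E : Set Ω) (hE : MeasurableSet E) :
    (S.condP k).restrict E
      = (ENNReal.ofReal (S.μ k))⁻¹ • S.P.restrict (E ∩ {ω | S.X 0 ω = k}) := by
  simp only [MSS.condP, ProbabilityTheory.cond]
  rw [Measure.restrict_smul, Measure.restrict_restrict hE, S.hX_marginal 0 k]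

lemma Phi_rpow (S : MSS N Ω) (κ s t : ℝ) (ω : Ω) :
    (S.Phi s t ω) ^ κ = Real.exp (κ * J S s t ω) := by
  show (Real.exp (J S s t ω)) ^ κ = _
  rw [Real.rpow_def_of_pos (Real.exp_pos _), Real.log_exp, mul_comm]

lemma log_Phi (S : MSS N Ω) (s t : ℝ) (ω : Ω) : Real.log (S.Phi s t ω) = J S s t ω :=
  Real.log_exp _

lemma prod_Phi_eq (S : MSS N Ω) (n : ℕ) (ω : Ω) :
    (∏ m ∈ Finset.range n, S.Phi (m : ℝ) ((m : ℝ) + 1) ω) = Real.exp (J S 0 (n:ℝ) ω) := by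
  have hsum : ∑ m ∈ Finset.range n, J S (m:ℝ) ((m:ℝ)+1) ω = J S 0 (n:ℝ) ω := by
    have h := intervalIntegral.sum_integral_adjacent_intervals (μ := MeasureTheory.volume)
      (a := fun k : ℕ => (k:ℝ)) (f := fun u => S.a (S.X u ω)) (n := n)
      (fun k _ => intervalIntegrable_path S ω _ _)
    simp only [Nat.cast_succ] at h
    simpa [J] using h
  rw [← hsum, Real.exp_sum]
  rfl

lemma restrict_partition (S : MSS N Ω) (μ0 : Measure Ω) (E : Set Ω) (hE : MeasurableSet E)
    (τ : ℝ) :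
    μ0.restrict E = ∑ k : Fin N, μ0.restrict (E ∩ {ω | S.X τ ω = k}) := by
  ext u hu
  rw [Measure.restrict_apply hu, Measure.finset_sum_apply]
  have hcover : u ∩ E = ⋃ k : Fin N, (u ∩ (E ∩ {ω | S.X τ ω = k})) := by
    ext ω
    simp only [Set.mem_inter_iff, Set.mem_iUnion, Set.mem_setOf_eq]
    constructor
    · rintro ⟨hu', hE'⟩
      exact ⟨S.X τ ω, hu', hE', rfl⟩
    · rintro ⟨k, hu', hE', -⟩
      exact ⟨hu', hE'⟩
  have hdisj : Pairwise (Function.onFun Disjoint fun k : Fin N =>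
      u ∩ (E ∩ {ω | S.X τ ω = k})) := by
    intro k k' hkk'
    refine Set.disjoint_left.2 fun ω h1 h2 => hkk' ?_
    rw [← h1.2.2, ← h2.2.2]
  rw [hcover, measure_iUnion hdisj
    (fun k => hu.inter (hE.inter (measurableSet_eqX S _ _))), tsum_fintype]
  exact Finset.sum_congr rfl fun k _ => by rw [Measure.restrict_apply hu]

end FnAux

/-- The matrix of finite measures `F` whose distribution functions are
`F_{ij}(t) = E_j[Φ_1^κ 1_{X_1 = i} 1_{log Φ_1 ≤ t}]`. -/
def Fmeas {N : ℕ} {Ω : Type*} [MeasurableSpace Ω] (S : MSS N Ω) (κ : ℝ)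
    (i j : Fin N) : Measure ℝ :=
  Measure.map (fun ω => Real.log (S.Phi 0 1 ω))
    (((S.condP j).restrict {ω | S.X 1 ω = i}).withDensity
      fun ω => ENNReal.ofReal ((S.Phi 0 1 ω) ^ κ))

/-- The `n`-fold convolution `F^{(n)}`: `F^{(0)}_{ij} = δ_{ij} · (unit mass at 0)` and
`F^{(n)}_{ij} = ∑_k F_{ik} ∗ F^{(n-1)}_{kj}`. -/
def Fn {N : ℕ} {Ω : Type*} [MeasurableSpace Ω] (S : MSS N Ω) (κ : ℝ) :
    ℕ → Fin N → Fin N → Measure ℝ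
  | 0 => fun i j => if i = j then Measure.dirac 0 else 0
  | (n + 1) => fun i j => ∑ k, (Fmeas S κ i k).conv (Fn S κ n k j)


namespace FnAux

open MeasureTheory ProbabilityTheory Filter Set
open scoped ENNReal

variable {N : ℕ} {Ω : Type*} [MeasurableSpace Ω]

/-- the candidate value of `F^{(n)}`. -/
noncomputable def Gm (S : MSS N Ω) (κ : ℝ) (n : ℕ) (i j : Fin N) : Measure ℝ :=
  (Measure.map (J S 0 (n:ℝ)) ((S.condP j).restrict {ω | S.X (n:ℝ) ω = i})).withDensity
    (fun x => ENNReal.ofReal (Real.exp (κ * x)))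

lemma Fmeas_repr (S : MSS N Ω) (κ : ℝ) (i k : Fin N) :
    Fmeas S κ i k
      = (Measure.map (J S 0 1) ((S.condP k).restrict {ω | S.X 1 ω = i})).withDensity
          (fun x => ENNReal.ofReal (Real.exp (κ * x))) := by
  rw [Fmeas]
  have h1 : (fun ω : Ω => ENNReal.ofReal ((S.Phi 0 1 ω) ^ κ))
      = fun ω => ENNReal.ofReal (Real.exp (κ * J S 0 1 ω)) := by
    funext ω; rw [Phi_rpow]
  have h2 : (fun ω : Ω => Real.log (S.Phi 0 1 ω)) = J S 0 1 := by
    funext ω; exact log_Phi S 0 1 ω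
  rw [h1, h2, map_withDensity_comp _ _ (measurable_J S one_pos) _ (hwmeas κ)]

lemma Gm_one (S : MSS N Ω) (κ : ℝ) (i j : Fin N) : Gm S κ 1 i j = Fmeas S κ i j := by
  rw [Fmeas_repr, Gm]
  simp only [Nat.cast_one]

lemma Fn_one (S : MSS N Ω) (κ : ℝ) (i j : Fin N) : Fn S κ 1 i j = Fmeas S κ i j := by
  show (∑ k, (Fmeas S κ i k).conv (Fn S κ 0 k j)) = Fmeas S κ i j
  rw [Finset.sum_eq_single j]
  · show (Fmeas S κ i j).conv (if j = j then Measure.dirac 0 else 0) = _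
    rw [if_pos rfl]
    exact conv_dirac_zero'' _
  · intro k _ hk
    show (Fmeas S κ i k).conv (if k = j then Measure.dirac 0 else 0) = 0
    rw [if_neg hk]
    simp [Measure.conv]
  · intro h
    exact absurd (Finset.mem_univ j) h

set_option maxHeartbeats 1000000 in
lemma Gm_succ (S : MSS N Ω) (κ : ℝ) (n : ℕ) (hn : 1 ≤ n) (i j : Fin N) :
    Gm S κ (n+1) i j = ∑ k, (Fmeas S κ i k).conv (Gm S κ n k j) := by
  haveI := S.hP
  have h0n : (0:ℝ) < (n:ℝ) := by exact_mod_cast hn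
  have hnn1 : (n:ℝ) < (n:ℝ)+1 := by linarith
  have h0n1 : (0:ℝ) < (n:ℝ)+1 := by linarith
  have hJB := measurable_J S hnn1
  have hJA := measurable_J S h0n
  have hJ0 := measurable_J S (one_pos (α := ℝ))
  have hJn1 := measurable_J S h0n1
  have hpair : Measurable fun ω => (J S (n:ℝ) ((n:ℝ)+1) ω, J S 0 (n:ℝ) ω) := hJB.prodMk hJA
  have hcast : ((n+1 : ℕ) : ℝ) = (n:ℝ)+1 := by push_cast; ring
  have hEq1 : Gm S κ (n+1) i j
      = ((Measure.map (J S 0 ((n:ℝ)+1))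
            ((S.condP j).restrict {ω | S.X ((n:ℝ)+1) ω = i})).withDensity
          (fun x => ENNReal.ofReal (Real.exp (κ * x)))) := by
    rw [Gm, hcast]
  rw [hEq1, restrict_partition S _ _ (measurableSet_eqX S _ _) (n:ℝ),
    map_sum_fin _ _ hJn1, withDensity_sum_fin]
  apply Finset.sum_congr rfl
  intro k _
  have hμk0 : ENNReal.ofReal (S.μ k) ≠ 0 := (ENNReal.ofReal_pos.2 (S.hμ_pos k)).ne'
  have hμkt : ENNReal.ofReal (S.μ k) ≠ ⊤ := ENNReal.ofReal_ne_top
  have hres : (S.condP j).restrict ({ω | S.X ((n:ℝ)+1) ω = i} ∩ {ω | S.X (n:ℝ) ω = k})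
      = (ENNReal.ofReal (S.μ j))⁻¹ • S.P.restrict (DD S n i j k) := by
    have hsets : {ω | S.X ((n:ℝ)+1) ω = i} ∩ {ω | S.X (n:ℝ) ω = k} ∩ {ω | S.X 0 ω = j}
        = DD S n i j k := by
      ext ω
      simp only [DD, Set.mem_inter_iff, Set.mem_setOf_eq]
      tauto
    rw [condP_restrict S j _ ((measurableSet_eqX S _ _).inter (measurableSet_eqX S _ _)),
      hsets]
  have hfun : J S 0 ((n:ℝ)+1)
      = (fun p : ℝ × ℝ => p.1 + p.2) ∘ (fun ω => (J S (n:ℝ) ((n:ℝ)+1) ω, J S 0 (n:ℝ) ω)) := by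
    funext ω
    show J S 0 ((n:ℝ)+1) ω = J S (n:ℝ) ((n:ℝ)+1) ω + J S 0 (n:ℝ) ω
    have h := J_add S ω 0 (n:ℝ) ((n:ℝ)+1)
    linarith
  have hpl : Measure.map (fun ω => (J S (n:ℝ) ((n:ℝ)+1) ω, J S 0 (n:ℝ) ω))
        (S.P.restrict (DD S n i j k))
      = (ENNReal.ofReal (S.μ k))⁻¹ •
        ((Measure.map (J S 0 1) (S.P.restrict (B0 S i k))).prod
          (Measure.map (J S 0 (n:ℝ)) (S.P.restrict (A0 S n j k)))) := by
    rw [← pair_law S n hn i j k, smul_smul, ENNReal.inv_mul_cancel hμk0 hμkt, one_smul]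
  have hGmrepr : Gm S κ n k j = (ENNReal.ofReal (S.μ j))⁻¹ •
      ((Measure.map (J S 0 (n:ℝ)) (S.P.restrict (A0 S n j k))).withDensity
        (fun x => ENNReal.ofReal (Real.exp (κ * x)))) := by
    rw [Gm, condP_restrict S j _ (measurableSet_eqX S _ _),
      show {ω | S.X (n:ℝ) ω = k} ∩ {ω | S.X 0 ω = j} = A0 S n j k from by
        rw [A0, Set.inter_comm],
      Measure.map_smul, withDensity_smul_measure]
  have hFmrepr : Fmeas S κ i k = (ENNReal.ofReal (S.μ k))⁻¹ •
      ((Measure.map (J S 0 1) (S.P.restrict (B0 S i k))).withDensity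
        (fun x => ENNReal.ofReal (Real.exp (κ * x)))) := by
    rw [Fmeas_repr, condP_restrict S k _ (measurableSet_eqX S _ _),
      show {ω | S.X 1 ω = i} ∩ {ω | S.X 0 ω = k} = B0 S i k from by
        rw [B0, Set.inter_comm],
      Measure.map_smul, withDensity_smul_measure]
  haveI hαf : IsFiniteMeasure ((Measure.map (J S 0 1) (S.P.restrict (B0 S i k))).withDensity
      (fun x => ENNReal.ofReal (Real.exp (κ * x)))) :=
    isFiniteMeasure_expDensity S κ one_pos _
  haveI hβf : IsFiniteMeasure ((Measure.map (J S 0 (n:ℝ))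
        (S.P.restrict (A0 S n j k))).withDensity
      (fun x => ENNReal.ofReal (Real.exp (κ * x)))) :=
    isFiniteMeasure_expDensity S κ h0n _
  have hwprod : (fun p : ℝ × ℝ => ENNReal.ofReal (Real.exp (κ * p.1))
        * ENNReal.ofReal (Real.exp (κ * p.2)))
      = fun p : ℝ × ℝ => ENNReal.ofReal (Real.exp (κ * (p.1 + p.2))) := by
    funext p
    rw [← ENNReal.ofReal_mul (Real.exp_nonneg _), ← Real.exp_add,
      show κ * p.1 + κ * p.2 = κ * (p.1 + p.2) by ring]
  rw [hres, Measure.map_smul, withDensity_smul_measure, hfun,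
    ← Measure.map_map measurable_add hpair, hpl, Measure.map_smul, withDensity_smul_measure,
    smul_smul]
  rw [hFmrepr, hGmrepr]
  simp only [Measure.conv]
  rw [smul_prod', prod_smul', smul_smul, Measure.map_smul]
  rw [prod_withDensity' _ _ _ _ (hwmeas κ) (hwmeas κ), hwprod,
    map_withDensity_comp _ _ measurable_add _ (hwmeas κ)]
  rw [mul_comm]

lemma Fn_eq_Gm (S : MSS N Ω) (κ : ℝ) :
    ∀ n, 1 ≤ n → ∀ i j, Fn S κ n i j = Gm S κ n i j := by
  intro n
  induction n with
  | zero => exact fun h => absurd h (by omega)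
  | succ n ih =>
    intro _ i j
    by_cases h1 : 1 ≤ n
    · rw [Gm_succ S κ n h1 i j]
      show (∑ k, (Fmeas S κ i k).conv (Fn S κ n k j))
        = ∑ k, (Fmeas S κ i k).conv (Gm S κ n k j)
      exact Finset.sum_congr rfl fun k _ => by rw [ih h1 k j]
    · have hn0 : n = 0 := by omega
      subst hn0
      rw [Fn_one, ← Gm_one]

end FnAux

/-- **Lemma 1.** For all `n ≥ 1`, `i, j ∈ E` and `t ∈ ℝ`,
`F^{(n)}_{ij}(t) = E_j[(Φ_1⋯Φ_n)^κ 1_{log(Φ_1⋯Φ_n) ≤ t} 1_{X_n = i}]`. -/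
theorem Fn_eq {N : ℕ} {Ω : Type*} [MeasurableSpace Ω] (S : MSS N Ω)
    (hα : ∑ i, S.a i * S.μ i < 0) (ha : ∃ i, 0 < S.a i)
    (κ : ℝ) (hκ : 0 < κ) (hκρ : specRad (S.A κ 1) = 1)
    (n : ℕ) (hn : 1 ≤ n) (i j : Fin N) (t : ℝ) :
    Fn S κ n i j (Set.Iic t)
      = ∫⁻ ω in {ω | Real.log (∏ m ∈ Finset.range n, S.Phi (m : ℝ) ((m : ℝ) + 1) ω) ≤ t
            ∧ S.X (n : ℝ) ω = i},
          ENNReal.ofReal ((∏ m ∈ Finset.range n, S.Phi (m : ℝ) ((m : ℝ) + 1) ω) ^ κ)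
          ∂(S.condP j) := by
  have h0n : (0:ℝ) < (n:ℝ) := by exact_mod_cast hn
  haveI := S.hP
  rw [FnAux.Fn_eq_Gm S κ n hn i j, FnAux.Gm, withDensity_apply _ measurableSet_Iic,
    setLIntegral_map measurableSet_Iic (FnAux.hwmeas κ) (FnAux.measurable_J S h0n),
    Measure.restrict_restrict ((FnAux.measurable_J S h0n) measurableSet_Iic)]
  have hset : (FnAux.J S 0 (n:ℝ)) ⁻¹' (Set.Iic t) ∩ {ω | S.X (n:ℝ) ω = i}
      = {ω | Real.log (∏ m ∈ Finset.range n, S.Phi (m:ℝ) ((m:ℝ)+1) ω) ≤ t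
            ∧ S.X (n:ℝ) ω = i} := by
    ext ω
    simp only [Set.mem_inter_iff, Set.mem_preimage, Set.mem_Iic, Set.mem_setOf_eq]
    rw [FnAux.prod_Phi_eq S n ω, Real.log_exp]
  rw [hset]
  apply lintegral_congr
  intro ω
  rw [FnAux.prod_Phi_eq S n ω]
  rw [show (Real.exp (FnAux.J S 0 (n:ℝ) ω)) ^ κ = Real.exp (κ * FnAux.J S 0 (n:ℝ) ω) from by
    rw [Real.rpow_def_of_pos (Real.exp_pos _), Real.log_exp, mul_comm]]
end
end

section
/- For every t > 0 and every n ≥ 1, P_μ( max_{1 ≤ j ≤ n} { R_1^j + Π_j · med_−((R_1^n − R_1^j)/Π_j) } > t ) ≤ 2 P_μ(R_1^n > t), where for each 1 ≤ j ≤ n, med_−((R_1^n − R_1^j)/Π_j) = min_{i∈E} m_{j,i} and m_{j,i} is any (fixed, deterministic) median of (R_1^n − R_1^j)/Π_j given X_{1−j} = i. -/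
open MeasureTheory ProbabilityTheory Filter

noncomputable section

section meas
open Set
variable {N : ℕ} {Ω : Type*} [mΩ : MeasurableSpace Ω]

lemma finmeas (A : Set (Fin N)) : MeasurableSet A := (Set.to_countable A).measurableSet

lemma finmeasurable {β : Type*} [MeasurableSpace β] (g : Fin N → β) : Measurable g :=
  fun _A _hA => finmeas _

variable (Y : ℝ → Ω → Fin N) (c d : ℝ)

lemma jointMeas (hcd : c ≤ d)
    (hY : ∀ u, u ∈ Icc c d → Measurable (Y u))
    (hrc : ∀ ω t, ∃ ε > 0, ∀ u ∈ Ico t (t + ε), Y u ω = Y t ω) :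
    Measurable (fun p : Ω × ℝ => Y (min d (max c p.2)) p.1) := by
  classical
  set clamp : ℝ → ℝ := fun t => min d (max c t) with hclamp
  have hclamp_mem : ∀ t, clamp t ∈ Icc c d := fun t =>
    ⟨le_min hcd (le_max_left _ _), min_le_left _ _⟩
  have hclamp_cont : Continuous clamp := continuous_const.min (continuous_const.max continuous_id)
  -- approximating times
  set tk : ℕ → ℤ → ℝ := fun m k => min d (((k : ℝ) + 1) / (m + 1)) with htk
  set Z : ℕ → Ω × ℝ → Fin N := fun m p => Y (tk m ⌊((m : ℝ) + 1) * clamp p.2⌋) p.1 with hZ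
  have htk_mem : ∀ (m : ℕ) (k : ℤ), ⌊((m : ℝ) + 1) * c⌋ ≤ k → tk m k ∈ Icc c d := by
    intro m k hk
    have hm1 : (0 : ℝ) < (m : ℝ) + 1 := by positivity
    refine ⟨le_min hcd ?_, min_le_left _ _⟩
    rw [le_div_iff₀ hm1]
    have : ((m : ℝ) + 1) * c < (⌊((m : ℝ) + 1) * c⌋ : ℝ) + 1 := Int.lt_floor_add_one _
    have h2 : ((⌊((m : ℝ) + 1) * c⌋ : ℝ) + 1) ≤ (k : ℝ) + 1 := by
      have hkk : ((⌊((m : ℝ) + 1) * c⌋ : ℝ)) ≤ (k : ℝ) := Int.cast_le.mpr hk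
      linarith
    linarith [this, h2]
  have hZmeas : ∀ m, Measurable (Z m) := by
    intro m
    have : ∀ i : Fin N, MeasurableSet (Z m ⁻¹' {i}) := by
      intro i
      have hset : Z m ⁻¹' {i} =
          ⋃ k : {k : ℤ // ⌊((m : ℝ) + 1) * c⌋ ≤ k},
            ({p : Ω × ℝ | ⌊((m : ℝ) + 1) * clamp p.2⌋ = (k : ℤ)} ∩
              Prod.fst ⁻¹' (Y (tk m k) ⁻¹' {i})) := by
        ext p
        simp only [mem_preimage, mem_singleton_iff, mem_iUnion, mem_inter_iff, mem_setOf_eq]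
        constructor
        · intro h
          refine ⟨⟨⌊((m : ℝ) + 1) * clamp p.2⌋, ?_⟩, rfl, h⟩
          exact Int.floor_le_floor (by
            have := (hclamp_mem p.2).1
            have hm1 : (0 : ℝ) ≤ (m : ℝ) + 1 := by positivity
            nlinarith)
        · rintro ⟨k, hk, h⟩
          show Y (tk m ⌊((m : ℝ) + 1) * clamp p.2⌋) p.1 = i
          rw [hk]; exact h
      rw [hset]
      refine MeasurableSet.iUnion fun k => MeasurableSet.inter ?_ ?_
      · have : Measurable fun p : Ω × ℝ => ⌊((m : ℝ) + 1) * clamp p.2⌋ :=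
          ((measurable_const.mul (hclamp_cont.measurable.comp measurable_snd))).floor
        exact this (measurableSet_singleton _)
      · exact measurable_fst (hY _ (htk_mem m k k.2) (finmeas {i}))
    exact measurable_to_countable' this
  -- eventual equality
  have hconv : ∀ p : Ω × ℝ, ∃ M : ℕ, ∀ m, M ≤ m → Z m p = Y (clamp p.2) p.1 := by
    intro p
    set t := clamp p.2 with ht
    have htmem := hclamp_mem p.2
    obtain ⟨ε, hε, heq⟩ := hrc p.1 t
    have key : ∀ m : ℕ, (1 : ℝ) / (m + 1) < min ε (d - t) → Z m p = Y t p.1 := by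
      intro m hm
      have hm1 : (0 : ℝ) < (m : ℝ) + 1 := by positivity
      set x : ℝ := ((⌊((m : ℝ) + 1) * t⌋ : ℝ) + 1) / (m + 1) with hx
      have hx1 : t < x := by
        rw [hx, lt_div_iff₀ hm1]
        have := Int.lt_floor_add_one (((m : ℝ) + 1) * t)
        linarith
      have hx2 : x ≤ t + 1 / (m + 1) := by
        rw [hx, div_le_iff₀ hm1]
        have := Int.floor_le (((m : ℝ) + 1) * t)
        have : (⌊((m : ℝ) + 1) * t⌋ : ℝ) ≤ ((m : ℝ) + 1) * t := this
        field_simp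
        nlinarith
      have hxd : x < d := by
        have h1 : (1:ℝ) / (m+1) < d - t := lt_of_lt_of_le hm (min_le_right _ _)
        linarith
      have hmin : tk m ⌊((m : ℝ) + 1) * t⌋ = x := min_eq_right hxd.le
      have : Y x p.1 = Y t p.1 := by
        apply heq
        constructor
        · exact hx1.le
        · have h1 : (1:ℝ) / (m+1) < ε := lt_of_lt_of_le hm (min_le_left _ _)
          linarith
      show Y (tk m ⌊((m : ℝ) + 1) * clamp p.2⌋) p.1 = Y t p.1
      rw [← ht, hmin]; exact this
    by_cases htd : t = d
    · refine ⟨0, fun m _ => ?_⟩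
      have hm1 : (0 : ℝ) < (m : ℝ) + 1 := by positivity
      have hgt : d < ((⌊((m : ℝ) + 1) * t⌋ : ℝ) + 1) / (m + 1) := by
        rw [lt_div_iff₀ hm1]
        have := Int.lt_floor_add_one (((m : ℝ) + 1) * t)
        rw [htd] at this ⊢
        linarith
      have hmin : tk m ⌊((m : ℝ) + 1) * t⌋ = d := min_eq_left hgt.le
      show Y (tk m ⌊((m : ℝ) + 1) * clamp p.2⌋) p.1 = Y (clamp p.2) p.1
      rw [← ht, hmin, htd]
    · have htd' : t < d := lt_of_le_of_ne htmem.2 htd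
      have hpos : 0 < min ε (d - t) := lt_min hε (by linarith)
      obtain ⟨M, hM⟩ := exists_nat_one_div_lt hpos
      refine ⟨M, fun m hm => key m ?_⟩
      calc (1:ℝ)/(m+1) ≤ 1/(M+1) := by
            apply one_div_le_one_div_of_le (by positivity)
            exact_mod_cast by omega
        _ < _ := hM
  -- limit
  have : ∀ i : Fin N, MeasurableSet ((fun p : Ω × ℝ => Y (clamp p.2) p.1) ⁻¹' {i}) := by
    intro i
    have hset : (fun p : Ω × ℝ => Y (clamp p.2) p.1) ⁻¹' {i} =
        ⋃ M : ℕ, ⋂ m : ℕ, ⋂ _ : M ≤ m, Z m ⁻¹' {i} := by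
      ext p
      simp only [mem_preimage, mem_singleton_iff, mem_iUnion, mem_iInter]
      constructor
      · intro h
        obtain ⟨M, hM⟩ := hconv p
        exact ⟨M, fun m hm => by rw [hM m hm, h]⟩
      · rintro ⟨M, hM⟩
        obtain ⟨M', hM'⟩ := hconv p
        have := hM (max M M') (le_max_left _ _)
        rw [hM' (max M M') (le_max_right _ _)] at this
        exact this
    rw [hset]
    exact MeasurableSet.iUnion fun M => MeasurableSet.iInter fun m =>
      MeasurableSet.iInter fun _ => hZmeas m (measurableSet_singleton _)
  exact measurable_to_countable' this


variable {Y c d}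

lemma intMeas1 (hcd : c ≤ d)
    (hY : ∀ u, u ∈ Icc c d → Measurable (Y u))
    (hrc : ∀ ω t, ∃ ε > 0, ∀ u ∈ Ico t (t + ε), Y u ω = Y t ω)
    (f : Fin N → ℝ) (a' b' : ℝ) (ha : c ≤ a') (hab : a' ≤ b') (hb : b' ≤ d) :
    Measurable (fun ω => ∫ u in a'..b', f (Y u ω)) := by
  classical
  have hJ : Measurable (fun p : Ω × ℝ => Y (min d (max c p.2)) p.1) := jointMeas Y c d hcd hY hrc
  set F : Ω × ℝ → ℝ := fun p =>
    if p.2 ∈ Ioc a' b' then f (Y (min d (max c p.2)) p.1) else 0 with hF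
  have hFmeas : Measurable F :=
    Measurable.ite (measurable_snd measurableSet_Ioc) ((finmeasurable f).comp hJ) measurable_const
  have key : (fun ω => ∫ u in a'..b', f (Y u ω)) = fun ω => ∫ u, F (ω, u) := by
    funext ω
    rw [intervalIntegral.integral_of_le hab, ← integral_indicator measurableSet_Ioc]
    refine integral_congr_ae (Filter.Eventually.of_forall fun u => ?_)
    rw [Set.indicator_apply]
    by_cases hu : u ∈ Ioc a' b'
    · have h1 : max c u = u := max_eq_right (le_trans ha hu.1.le)
      have h2 : min d u = u := min_eq_right (le_trans hu.2 hb)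
      simp only [hF, hu, if_pos, h1, h2]
    · simp only [hF]; rw [if_neg hu, if_neg hu]
  rw [key]
  exact (MeasureTheory.StronglyMeasurable.integral_prod_right'
    (ν := volume) (f := F) hFmeas.stronglyMeasurable).measurable

lemma intMeas2 (hcd : c ≤ d)
    (hY : ∀ u, u ∈ Icc c d → Measurable (Y u))
    (hrc : ∀ ω t, ∃ ε > 0, ∀ u ∈ Ico t (t + ε), Y u ω = Y t ω)
    (f g : Fin N → ℝ) (e : ℝ) (he1 : c ≤ e - 1) (he2 : e ≤ d) :
    Measurable (fun ω =>
      ∫ u in (e-1)..e, Real.exp (2 * ∫ v in u..e, f (Y v ω)) * (g (Y u ω)) ^ 2) := by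
  classical
  have hJ : Measurable (fun p : Ω × ℝ => Y (min d (max c p.2)) p.1) := jointMeas Y c d hcd hY hrc
  set F : (Ω × ℝ) × ℝ → ℝ := fun q =>
    if q.2 ∈ Ioc q.1.2 e then f (Y (min d (max c q.2)) q.1.1) else 0 with hF
  have hFmeas : Measurable F := by
    refine Measurable.ite ?_ ?_ measurable_const
    · have : {q : (Ω × ℝ) × ℝ | q.2 ∈ Ioc q.1.2 e} =
          {q : (Ω × ℝ) × ℝ | q.1.2 < q.2} ∩ {q | q.2 ≤ e} := by
        ext q; simp [Set.mem_Ioc]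
      rw [this]
      exact (measurableSet_lt (measurable_fst.snd) measurable_snd).inter
        (measurableSet_le measurable_snd measurable_const)
    · exact (finmeasurable f).comp (hJ.comp ((measurable_fst.fst).prodMk measurable_snd))
  set C : Ω × ℝ → ℝ := fun p => ∫ v, F (p, v) with hC
  have hCmeas : Measurable C :=
    (MeasureTheory.StronglyMeasurable.integral_prod_right'
      (ν := volume) (f := F) hFmeas.stronglyMeasurable).measurable
  have hCval : ∀ ω : Ω, ∀ u ∈ Ioc (e-1) e, C (ω, u) = ∫ v in u..e, f (Y v ω) := by
    intro ω u hu
    rw [intervalIntegral.integral_of_le hu.2, ← integral_indicator measurableSet_Ioc]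
    show (∫ v, F ((ω, u), v)) = _
    refine integral_congr_ae (Filter.Eventually.of_forall fun v => ?_)
    rw [Set.indicator_apply]
    by_cases hv : v ∈ Ioc u e
    · have h1 : max c v = v := max_eq_right (le_trans he1 (le_trans hu.1.le hv.1.le))
      have h2 : min d v = v := min_eq_right (le_trans hv.2 he2)
      simp only [hF, hv, if_pos, h1, h2]
    · simp only [hF]; rw [if_neg hv, if_neg hv]
  set G : Ω × ℝ → ℝ := fun p => if p.2 ∈ Ioc (e-1) e then
      Real.exp (2 * C p) * (g (Y (min d (max c p.2)) p.1)) ^ 2 else 0 with hG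
  have hGmeas : Measurable G := by
    refine Measurable.ite (measurable_snd measurableSet_Ioc) ?_ measurable_const
    exact (Real.continuous_exp.measurable.comp (measurable_const.mul hCmeas)).mul
      (((finmeasurable g).comp hJ).pow_const 2)
  have key : (fun ω => ∫ u in (e-1)..e, Real.exp (2 * ∫ v in u..e, f (Y v ω)) * (g (Y u ω))^2)
      = fun ω => ∫ u, G (ω, u) := by
    funext ω
    rw [intervalIntegral.integral_of_le (by linarith : e - 1 ≤ e),
      ← integral_indicator measurableSet_Ioc]
    refine integral_congr_ae (Filter.Eventually.of_forall fun u => ?_)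
    rw [Set.indicator_apply]
    by_cases hu : u ∈ Ioc (e-1) e
    · have h1 : max c u = u := max_eq_right (le_trans he1 hu.1.le)
      have h2 : min d u = u := min_eq_right (le_trans hu.2 he2)
      simp only [hG, hu, if_pos, h1, h2, hCval ω u hu]
    · simp only [hG]; rw [if_neg hu, if_neg hu]
  rw [key]
  exact (MeasureTheory.StronglyMeasurable.integral_prod_right'
    (ν := volume) (f := G) hGmeas.stronglyMeasurable).measurable

end meas

namespace SymmAux
open MeasurableSpace Set
variable {N : ℕ} {Ω : Type*} [mΩ : MeasurableSpace Ω]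

def mX (S : MSS N Ω) (I : Set ℝ) : MeasurableSpace Ω :=
  ⨆ u ∈ I, MeasurableSpace.comap (S.X u) ⊤

lemma mX_le (S : MSS N Ω) (I : Set ℝ) : mX S I ≤ mΩ := by
  refine iSup_le fun u => iSup_le fun _ => ?_
  rintro A ⟨B, -, rfl⟩
  exact S.hX_meas u (finmeas B)

lemma mX_mono (S : MSS N Ω) {I J : Set ℝ} (h : I ⊆ J) : mX S I ≤ mX S J :=
  biSup_mono h

lemma measurable_X_mX (S : MSS N Ω) {I : Set ℝ} {u : ℝ} (hu : u ∈ I) :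
    Measurable[mX S I] (S.X u) := by
  intro A _
  exact (le_biSup (f := fun u => MeasurableSpace.comap (S.X u) (⊤ : MeasurableSpace (Fin N))) hu)
    _ ⟨A, trivial, rfl⟩

def mXi (S : MSSN N Ω) (I : Set ℝ) (K : Set ℤ) : MeasurableSpace Ω :=
  mX S.toMSS I ⊔ ⨆ k ∈ K, MeasurableSpace.comap (S.ξ k) inferInstance

lemma mXi_le (S : MSSN N Ω) (I : Set ℝ) (K : Set ℤ) : mXi S I K ≤ mΩ := by
  refine sup_le (mX_le _ _) (iSup_le fun k => iSup_le fun _ => ?_)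
  exact (S.hξ_meas k).comap_le

lemma measurable_xi (S : MSSN N Ω) {I : Set ℝ} {K : Set ℤ} {k : ℤ} (hk : k ∈ K) :
    Measurable[mXi S I K] (S.ξ k) := by
  intro A hA
  have h1 : (⨆ k ∈ K, MeasurableSpace.comap (S.ξ k) inferInstance) ≤ mXi S I K := le_sup_right
  exact h1 _ ((le_biSup (f := fun k => MeasurableSpace.comap (S.ξ k) inferInstance) hk) _
    ⟨A, hA, rfl⟩)

lemma measurable_mX_mXi (S : MSSN N Ω) {I : Set ℝ} {K : Set ℤ} {f : Ω → ℝ}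
    (hf : Measurable[mX S.toMSS I] f) : Measurable[mXi S I K] f :=
  hf.mono le_sup_left le_rfl

lemma measurable_Phin (S : MSSN N Ω) {c d : ℝ} (hcd : c ≤ d) (k : ℤ)
    (h1 : c ≤ (k : ℝ) - 1) (h2 : (k : ℝ) ≤ d) :
    Measurable[mX S.toMSS (Set.Icc c d)] (S.Phin k) := by
  have h := intMeas1 (mΩ := mX S.toMSS (Set.Icc c d)) (Y := S.X) (c := c) (d := d) hcd
    (fun u hu => measurable_X_mX S.toMSS hu) S.hX_rightcont S.a ((k : ℝ) - 1) k h1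
    (by linarith) h2
  exact Real.measurable_exp.comp h

lemma measurable_V (S : MSSN N Ω) {c d : ℝ} (hcd : c ≤ d) (k : ℤ)
    (h1 : c ≤ (k : ℝ) - 1) (h2 : (k : ℝ) ≤ d) :
    Measurable[mX S.toMSS (Set.Icc c d)] (S.V k) :=
  intMeas2 (mΩ := mX S.toMSS (Set.Icc c d)) (Y := S.X) (c := c) (d := d) hcd
    (fun u hu => measurable_X_mX S.toMSS hu) S.hX_rightcont S.a S.sig k h1 h2

lemma measurable_Pi (S : MSSN N Ω) {c d : ℝ} (hcd : c ≤ d) {k : ℕ}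
    (h1 : c ≤ 1 - (k : ℝ)) (h2 : (1 : ℝ) ≤ d) :
    Measurable[mX S.toMSS (Set.Icc c d)] (S.Pi k) := by
  unfold MSSN.Pi
  refine Finset.measurable_prod _ fun k' hk' => ?_
  have hk' : k' < k := Finset.mem_range.mp hk'
  refine measurable_Phin S hcd (1 - k') ?_ ?_
  · push_cast
    have : (k' : ℝ) + 1 ≤ (k : ℝ) := by exact_mod_cast hk'
    linarith
  · push_cast
    have : (0:ℝ) ≤ (k' : ℝ) := Nat.cast_nonneg _
    linarith

lemma measurable_b (S : MSSN N Ω) {c d : ℝ} {K : Set ℤ} (hcd : c ≤ d) (k : ℤ)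
    (h1 : c ≤ (k : ℝ) - 1) (h2 : (k : ℝ) ≤ d) (hK : k ∈ K) :
    Measurable[mXi S (Set.Icc c d) K] (S.b k) := by
  unfold MSSN.b
  exact (measurable_mX_mXi S
    (Real.continuous_sqrt.measurable.comp (measurable_V S hcd k h1 h2))).mul
    (measurable_xi S hK)

lemma measurable_R1part (S : MSSN N Ω) (j j' : ℕ) (hj : j' ≤ j) :
    Measurable[mXi S (Set.Icc (1 - (j:ℝ)) 1) {i : ℤ | 2 - (j:ℤ) ≤ i}] (S.R1part j') := by
  have hcd : (1 : ℝ) - (j:ℝ) ≤ 1 := by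
    have : (0:ℝ) ≤ (j : ℝ) := Nat.cast_nonneg _
    linarith
  unfold MSSN.R1part
  refine Finset.measurable_sum _ fun k hk => ?_
  have hk : k < j' := Finset.mem_range.mp hk
  have hkj : (k : ℝ) + 1 ≤ (j : ℝ) := by
    exact_mod_cast lt_of_lt_of_le hk hj
  refine Measurable.mul ?_ ?_
  · exact measurable_mX_mXi S (measurable_Pi S hcd (by linarith) le_rfl)
  · refine measurable_b S hcd (1 - k) (by push_cast; linarith) ?_ ?_
    · push_cast
      have : (0:ℝ) ≤ (k : ℝ) := Nat.cast_nonneg _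
      linarith
    · show 2 - (j:ℤ) ≤ 1 - (k:ℤ)
      omega

lemma Pi_pos (S : MSSN N Ω) (k : ℕ) (ω : Ω) : 0 < S.Pi k ω := by
  unfold MSSN.Pi
  exact Finset.prod_pos fun k' _ => Real.exp_pos _

lemma D_eq (S : MSSN N Ω) (j n : ℕ) (hjn : j ≤ n) (ω : Ω) :
    (S.R1part n ω - S.R1part j ω) / S.Pi j ω
      = ∑ k ∈ Finset.Ico j n, (∏ k' ∈ Finset.Ico j k, S.Phin (1 - k') ω) * S.b (1 - k) ω := by
  have hPi : S.Pi j ω ≠ 0 := (Pi_pos S j ω).ne'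
  have hsplit : ∀ k, j ≤ k →
      S.Pi k ω = S.Pi j ω * ∏ k' ∈ Finset.Ico j k, S.Phin (1 - k') ω := by
    intro k hk
    unfold MSSN.Pi
    rw [Finset.range_eq_Ico, Finset.range_eq_Ico]
    exact (Finset.prod_Ico_consecutive (fun k' : ℕ => S.Phin (1 - k') ω) (Nat.zero_le j) hk).symm
  have hdiff : S.R1part n ω - S.R1part j ω
      = ∑ k ∈ Finset.Ico j n, S.Pi k ω * S.b (1 - k) ω := by
    unfold MSSN.R1part
    rw [Finset.sum_Ico_eq_sub _ hjn]
  rw [hdiff, Finset.sum_div]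
  refine Finset.sum_congr rfl fun k hk => ?_
  rw [hsplit k (Finset.mem_Ico.mp hk).1]
  field_simp

lemma measurable_D (S : MSSN N Ω) (j n : ℕ) (hjn : j ≤ n) :
    Measurable[mXi S (Set.Iic (1 - (j:ℝ))) {i : ℤ | i ≤ 1 - (j:ℤ)}]
      (fun ω => ∑ k ∈ Finset.Ico j n,
        (∏ k' ∈ Finset.Ico j k, S.Phin (1 - k') ω) * S.b (1 - k) ω) := by
  have hcd : (1:ℝ) - (n:ℝ) ≤ 1 - (j:ℝ) := by
    have : (j:ℝ) ≤ (n:ℝ) := by exact_mod_cast hjn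
    linarith
  have hsub : Set.Icc (1 - (n:ℝ)) (1 - (j:ℝ)) ⊆ Set.Iic (1 - (j:ℝ)) := fun x hx => hx.2
  have hmono : mXi S (Set.Icc (1 - (n:ℝ)) (1 - (j:ℝ))) {i : ℤ | i ≤ 1 - (j:ℤ)}
      ≤ mXi S (Set.Iic (1 - (j:ℝ))) {i : ℤ | i ≤ 1 - (j:ℤ)} :=
    sup_le_sup_right (mX_mono _ hsub) _
  refine Measurable.mono ?_ hmono le_rfl
  refine Finset.measurable_sum _ fun k hk => ?_
  obtain ⟨hk1, hk2⟩ := Finset.mem_Ico.mp hk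
  have hkn : (k:ℝ) + 1 ≤ (n:ℝ) := by exact_mod_cast hk2
  have hjk : (j:ℝ) ≤ (k:ℝ) := by exact_mod_cast hk1
  refine Measurable.mul ?_ ?_
  · refine measurable_mX_mXi S (Finset.measurable_prod _ fun k' hk' => ?_)
    obtain ⟨hk'1, hk'2⟩ := Finset.mem_Ico.mp hk'
    have h1 : (j:ℝ) ≤ (k':ℝ) := by exact_mod_cast hk'1
    have h2 : (k':ℝ) + 1 ≤ (k:ℝ) := by exact_mod_cast hk'2
    refine measurable_Phin S hcd (1 - k') (by push_cast; linarith) (by push_cast; linarith)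
  · refine measurable_b S hcd (1 - k) (by push_cast; linarith) (by push_cast; linarith) ?_
    show (1:ℤ) - (k:ℤ) ≤ 1 - (j:ℤ)
    omega

lemma integrable_comp (S : MSS N Ω) (h : Fin N → ℝ) (t : ℝ) :
    Integrable (fun ω => h (S.X t ω)) S.P := by
  haveI := S.hP
  refine (integrable_const (∑ i, ‖h i‖)).mono' ?_ ?_
  · exact ((finmeasurable h).comp (S.hX_meas t)).aestronglyMeasurable
  · exact Filter.Eventually.of_forall fun ω =>
      Finset.single_le_sum (fun i _ => norm_nonneg (h i)) (Finset.mem_univ _)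

lemma stepA (S : MSS N Ω) (T : Finset ℝ) :
    ∀ (s : ℝ), (∀ u ∈ T, s ≤ u) → ∀ f : ℝ → Set (Fin N),
    ∃ g : Fin N → ℝ, ∀ H : Set Ω, MeasurableSet[mX S (Set.Iic s)] H →
      (S.P (H ∩ {ω | ∀ u ∈ T, S.X u ω ∈ f u})).toReal = ∫ ω in H, g (S.X s ω) ∂S.P := by
  haveI := S.hP
  induction T using Finset.strongInduction with
  | _ T ih =>
    rcases T.eq_empty_or_nonempty with rfl | hT
    · intro s _ f
      refine ⟨fun _ => 1, fun H _ => ?_⟩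
      have hU : {ω : Ω | ∀ u ∈ (∅ : Finset ℝ), S.X u ω ∈ f u} = Set.univ := by
        ext ω; simp
      rw [hU, Set.inter_univ, setIntegral_const]
      simp [Measure.real]
    · intro s hs f
      set t₁ := T.min' hT with ht₁
      have ht₁T : t₁ ∈ T := T.min'_mem hT
      have hst₁ : s ≤ t₁ := hs t₁ ht₁T
      obtain ⟨g', hg'⟩ := ih (T.erase t₁) (T.erase_ssubset ht₁T) t₁
        (fun u hu => T.min'_le u (Finset.mem_of_mem_erase hu)) f
      classical
      set f₁ : Fin N → ℝ := fun i => if i ∈ f t₁ then g' i else 0 with hf₁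
      set EQ := NormedSpace.exp ((t₁ - s) •
        (Matrix.of fun i j => S.lam i * (S.q i j - if i = j then 1 else 0))) with hEQ
      refine ⟨fun i => ∑ j, EQ i j * f₁ j, fun H hH => ?_⟩
      have hm : mX S (Set.Iic s) ≤ mΩ := mX_le S _
      have hm₁ : mX S (Set.Iic t₁) ≤ mΩ := mX_le S _
      haveI : IsFiniteMeasure (S.P.trim hm) := ⟨by
        rw [trim_measurableSet_eq hm MeasurableSet.univ]; exact measure_lt_top _ _⟩
      have hGsplit : {ω : Ω | ∀ u ∈ T, S.X u ω ∈ f u}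
          = {ω | S.X t₁ ω ∈ f t₁} ∩ {ω | ∀ u ∈ T.erase t₁, S.X u ω ∈ f u} := by
        ext ω
        simp only [Set.mem_inter_iff, Set.mem_setOf_eq, Finset.mem_erase]
        constructor
        · exact fun h => ⟨h t₁ ht₁T, fun u hu => h u hu.2⟩
        · rintro ⟨h1, h2⟩ u hu
          by_cases huu : u = t₁
          · rwa [huu]
          · exact h2 u ⟨huu, hu⟩
      have hA : MeasurableSet[mX S (Set.Iic t₁)] {ω | S.X t₁ ω ∈ f t₁} :=
        measurable_X_mX S (Set.mem_Iic.mpr le_rfl) (finmeas (f t₁))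
      have hHA : MeasurableSet[mX S (Set.Iic t₁)] (H ∩ {ω | S.X t₁ ω ∈ f t₁}) :=
        MeasurableSet.inter ((mX_mono S (Set.Iic_subset_Iic.mpr hst₁)) _ hH) hA
      have e1 : (S.P (H ∩ {ω | ∀ u ∈ T, S.X u ω ∈ f u})).toReal
          = ∫ ω in H ∩ {ω | S.X t₁ ω ∈ f t₁}, g' (S.X t₁ ω) ∂S.P := by
        rw [hGsplit, ← Set.inter_assoc]
        exact hg' _ hHA
      have e2 : ∫ ω in H ∩ {ω | S.X t₁ ω ∈ f t₁}, g' (S.X t₁ ω) ∂S.P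
          = ∫ ω in H, f₁ (S.X t₁ ω) ∂S.P := by
        rw [← setIntegral_indicator (hm₁ _ hA)]
        refine setIntegral_congr_fun (hm _ hH) fun ω _ => ?_
        by_cases hx : S.X t₁ ω ∈ f t₁
        · simp [Set.indicator_apply, Set.mem_setOf_eq, hf₁, hx]
        · simp [Set.indicator_apply, Set.mem_setOf_eq, hf₁, hx]
      have hint : Integrable (fun ω => f₁ (S.X t₁ ω)) S.P := integrable_comp S f₁ t₁
      have e3 : ∫ ω in H, f₁ (S.X t₁ ω) ∂S.P
          = ∫ ω in H, (S.P[(fun ω => f₁ (S.X t₁ ω)) | mX S (Set.Iic s)]) ω ∂S.P :=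
        (setIntegral_condExp hm hint hH).symm
      have e4 : ∫ ω in H, (S.P[(fun ω => f₁ (S.X t₁ ω)) | mX S (Set.Iic s)]) ω ∂S.P
          = ∫ ω in H, ∑ j, EQ (S.X s ω) j * f₁ j ∂S.P := by
        refine setIntegral_congr_ae (hm _ hH) ?_
        filter_upwards [S.hX_markov s t₁ hst₁ f₁] with ω hω
        exact fun _ => hω
      rw [e1, e2, e3, e4]

open ProbabilityTheory

def pX (S : MSS N Ω) (I : Set ℝ) : Set (Set Ω) :=
  {G | ∃ T : Finset ℝ, ↑T ⊆ I ∧ ∃ f : ℝ → Set (Fin N), G = {ω | ∀ u ∈ T, S.X u ω ∈ f u}}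

def pXi (S : MSSN N Ω) (K : Set ℤ) : Set (Set Ω) :=
  {G | ∃ T : Finset ℤ, ↑T ⊆ K ∧ ∃ B : ℤ → Set ℝ, (∀ k, MeasurableSet (B k)) ∧
    G = {ω | ∀ k ∈ T, S.ξ k ω ∈ B k}}

def px (S : MSSN N Ω) (I : Set ℝ) (K : Set ℤ) : Set (Set Ω) :=
  {G | ∃ GX ∈ pX S.toMSS I, ∃ Gξ ∈ pXi S K, G = GX ∩ Gξ}

lemma pX_inter (S : MSS N Ω) {I : Set ℝ} {G G' : Set Ω} (hG : G ∈ pX S I) (hG' : G' ∈ pX S I) :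
    G ∩ G' ∈ pX S I := by
  classical
  obtain ⟨T, hT, f, rfl⟩ := hG
  obtain ⟨T', hT', f', rfl⟩ := hG'
  refine ⟨T ∪ T', by rw [Finset.coe_union]; exact Set.union_subset hT hT',
    fun u => (if u ∈ T then f u else Set.univ) ∩ (if u ∈ T' then f' u else Set.univ), ?_⟩
  ext ω
  simp only [Set.mem_inter_iff, Set.mem_setOf_eq, Finset.mem_union]
  constructor
  · rintro ⟨h1, h2⟩ u _
    constructor
    · by_cases h : u ∈ T
      · rw [if_pos h]; exact h1 u h
      · rw [if_neg h]; trivial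
    · by_cases h : u ∈ T'
      · rw [if_pos h]; exact h2 u h
      · rw [if_neg h]; trivial
  · intro h
    constructor
    · intro u hu; have := (h u (Or.inl hu)).1; rwa [if_pos hu] at this
    · intro u hu; have := (h u (Or.inr hu)).2; rwa [if_pos hu] at this

lemma pXi_inter (S : MSSN N Ω) {K : Set ℤ} {G G' : Set Ω} (hG : G ∈ pXi S K)
    (hG' : G' ∈ pXi S K) : G ∩ G' ∈ pXi S K := by
  classical
  obtain ⟨T, hT, B, hB, rfl⟩ := hG
  obtain ⟨T', hT', B', hB', rfl⟩ := hG'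
  refine ⟨T ∪ T', by rw [Finset.coe_union]; exact Set.union_subset hT hT',
    fun k => (if k ∈ T then B k else Set.univ) ∩ (if k ∈ T' then B' k else Set.univ),
    fun k => ?_, ?_⟩
  · refine MeasurableSet.inter ?_ ?_ <;> [split_ifs; split_ifs]
    exacts [hB k, MeasurableSet.univ, hB' k, MeasurableSet.univ]
  ext ω
  simp only [Set.mem_inter_iff, Set.mem_setOf_eq, Finset.mem_union]
  constructor
  · rintro ⟨h1, h2⟩ k _
    constructor
    · by_cases h : k ∈ T
      · rw [if_pos h]; exact h1 k h
      · rw [if_neg h]; trivial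
    · by_cases h : k ∈ T'
      · rw [if_pos h]; exact h2 k h
      · rw [if_neg h]; trivial
  · intro h
    constructor
    · intro k hk; have := (h k (Or.inl hk)).1; rwa [if_pos hk] at this
    · intro k hk; have := (h k (Or.inr hk)).2; rwa [if_pos hk] at this

lemma univ_mem_pX (S : MSS N Ω) (I : Set ℝ) : Set.univ ∈ pX S I :=
  ⟨∅, by simp, fun _ => Set.univ, by ext ω; simp⟩

lemma univ_mem_pXi (S : MSSN N Ω) (K : Set ℤ) : Set.univ ∈ pXi S K :=
  ⟨∅, by simp, fun _ => Set.univ, fun _ => MeasurableSet.univ, by ext ω; simp⟩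

lemma isPiSystem_px (S : MSSN N Ω) (I : Set ℝ) (K : Set ℤ) : IsPiSystem (px S I K) := by
  rintro G ⟨GX, hGX, Gξ, hGξ, rfl⟩ G' ⟨GX', hGX', Gξ', hGξ', rfl⟩ _
  exact ⟨GX ∩ GX', pX_inter _ hGX hGX', Gξ ∩ Gξ', pXi_inter _ hGξ hGξ',
    Set.inter_inter_inter_comm _ _ _ _⟩

lemma generateFrom_px (S : MSSN N Ω) (I : Set ℝ) (K : Set ℤ) :
    MeasurableSpace.generateFrom (px S I K) = mXi S I K := by
  apply le_antisymm
  · refine MeasurableSpace.generateFrom_le ?_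
    rintro G ⟨GX, ⟨T, hT, f, rfl⟩, Gξ, ⟨T', hT', B, hB, rfl⟩, rfl⟩
    have hle1 : mX S.toMSS I ≤ mXi S I K := le_sup_left
    have hle2 : (⨆ k ∈ K, MeasurableSpace.comap (S.ξ k) inferInstance) ≤ mXi S I K :=
      le_sup_right
    refine MeasurableSet.inter ?_ ?_
    · have h : {ω | ∀ u ∈ T, S.X u ω ∈ f u} = ⋂ u ∈ T, S.X u ⁻¹' f u := by
        ext ω; simp
      rw [h]
      refine Finset.measurableSet_biInter _ fun u hu => ?_
      exact hle1 _ (measurable_X_mX S.toMSS (hT hu) (finmeas (f u)))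
    · have h : {ω | ∀ k ∈ T', S.ξ k ω ∈ B k} = ⋂ k ∈ T', S.ξ k ⁻¹' B k := by
        ext ω; simp
      rw [h]
      refine Finset.measurableSet_biInter _ fun k hk => ?_
      refine hle2 _ ?_
      exact (le_biSup (f := fun k => MeasurableSpace.comap (S.ξ k) inferInstance) (hT' hk)) _
        ⟨B k, hB k, rfl⟩
  · refine sup_le ?_ ?_
    · refine iSup_le fun u => iSup_le fun hu => ?_
      rintro A ⟨C, -, rfl⟩
      refine MeasurableSpace.measurableSet_generateFrom ?_
      refine ⟨{ω | ∀ v ∈ ({u} : Finset ℝ), S.X v ω ∈ C}, ⟨{u}, by simpa using hu,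
        fun _ => C, rfl⟩, Set.univ, univ_mem_pXi S K, ?_⟩
      ext ω; simp
    · refine iSup_le fun k => iSup_le fun hk => ?_
      rintro A ⟨C, hC, rfl⟩
      refine MeasurableSpace.measurableSet_generateFrom ?_
      refine ⟨Set.univ, univ_mem_pX S.toMSS I,
        {ω | ∀ l ∈ ({k} : Finset ℤ), S.ξ l ω ∈ C}, ⟨{k}, by simpa using hk,
        fun _ => C, fun _ => hC, rfl⟩, ?_⟩
      ext ω; simp

lemma measurable_cyl_xi (S : MSSN N Ω) (T : Finset ℤ) (B : ℤ → Set ℝ)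
    (hB : ∀ k, MeasurableSet (B k)) :
    MeasurableSet[⨆ n : ℤ, MeasurableSpace.comap (S.ξ n) inferInstance]
      {ω | ∀ k ∈ T, S.ξ k ω ∈ B k} := by
  have h : {ω | ∀ k ∈ T, S.ξ k ω ∈ B k} = ⋂ k ∈ T, S.ξ k ⁻¹' B k := by ext ω; simp
  rw [h]
  refine Finset.measurableSet_biInter _ fun k _ => ?_
  exact (le_iSup (f := fun k => MeasurableSpace.comap (S.ξ k) inferInstance) k) _ ⟨B k, hB k, rfl⟩

lemma measurable_cyl_X (S : MSS N Ω) (A : Set Ω) {I : Set ℝ}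
    (hA : MeasurableSet[mX S I] A) :
    MeasurableSet[⨆ t : ℝ, MeasurableSpace.comap (S.X t) ⊤] A := by
  refine (?_ : mX S I ≤ _) _ hA
  exact iSup_le fun u => iSup_le fun _ =>
    le_iSup (f := fun t => MeasurableSpace.comap (S.X t) (⊤ : MeasurableSpace (Fin N))) u

lemma xiX_mul (S : MSSN N Ω) {A C : Set Ω}
    (hA : MeasurableSet[⨆ n : ℤ, MeasurableSpace.comap (S.ξ n) inferInstance] A)
    (hC : MeasurableSet[⨆ t : ℝ, MeasurableSpace.comap (S.X t) ⊤] C) :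
    S.P (A ∩ C) = S.P A * S.P C :=
  ((ProbabilityTheory.Indep_iff _ _ _).mp S.hξ_indepX) A C hA hC

lemma xi_cyl_mul (S : MSSN N Ω) (T₁ T₂ : Finset ℤ) (hdisj : Disjoint T₁ T₂) (B C : ℤ → Set ℝ)
    (hB : ∀ k, MeasurableSet (B k)) (hC : ∀ k, MeasurableSet (C k)) :
    S.P ({ω | ∀ k ∈ T₁, S.ξ k ω ∈ B k} ∩ {ω | ∀ k ∈ T₂, S.ξ k ω ∈ C k})
      = S.P {ω | ∀ k ∈ T₁, S.ξ k ω ∈ B k} * S.P {ω | ∀ k ∈ T₂, S.ξ k ω ∈ C k} := by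
  classical
  have hiid := iIndepFun_iff_measure_inter_preimage_eq_mul.mp S.hξ_iid
  set D : ℤ → Set ℝ := fun k => if k ∈ T₁ then B k else C k with hD
  have hDmeas : ∀ k, MeasurableSet (D k) := fun k => by
    rw [hD]; dsimp only; split_ifs; exacts [hB k, hC k]
  have h1 : {ω | ∀ k ∈ T₁, S.ξ k ω ∈ B k} ∩ {ω | ∀ k ∈ T₂, S.ξ k ω ∈ C k}
      = ⋂ k ∈ (T₁ ∪ T₂), S.ξ k ⁻¹' D k := by
    ext ω
    simp only [Set.mem_inter_iff, Set.mem_setOf_eq, Set.mem_iInter, Finset.mem_union,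
      Set.mem_preimage]
    constructor
    · rintro ⟨hA, hB'⟩ k hk
      show S.ξ k ω ∈ D k
      rw [hD]; dsimp only
      split_ifs with h
      · exact hA k h
      · exact hB' k (hk.resolve_left h)
    · intro h
      constructor
      · intro k hk
        have h2 := h k (Or.inl hk)
        rw [hD] at h2; dsimp only at h2; rwa [if_pos hk] at h2
      · intro k hk
        have hk1 : k ∉ T₁ := fun hh => (Finset.disjoint_left.mp hdisj hh) hk
        have h2 := h k (Or.inr hk)
        rw [hD] at h2; dsimp only at h2; rwa [if_neg hk1] at h2
  have h2 : {ω | ∀ k ∈ T₁, S.ξ k ω ∈ B k} = ⋂ k ∈ T₁, S.ξ k ⁻¹' D k := by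
    ext ω
    simp only [Set.mem_setOf_eq, Set.mem_iInter, Set.mem_preimage]
    refine forall₂_congr fun k hk => ?_
    rw [hD]; dsimp only; rw [if_pos hk]
  have h3 : {ω | ∀ k ∈ T₂, S.ξ k ω ∈ C k} = ⋂ k ∈ T₂, S.ξ k ⁻¹' D k := by
    ext ω
    simp only [Set.mem_setOf_eq, Set.mem_iInter, Set.mem_preimage]
    refine forall₂_congr fun k hk => ?_
    have hk1 : k ∉ T₁ := fun hh => (Finset.disjoint_left.mp hdisj hh) hk
    rw [hD]; dsimp only; rw [if_neg hk1]
  rw [h1, h2, h3, hiid (T₁ ∪ T₂) (fun k _ => hDmeas k), hiid T₁ (fun k _ => hDmeas k),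
    hiid T₂ (fun k _ => hDmeas k), Finset.prod_union hdisj]

lemma indep_cond (S : MSSN N Ω) (j : ℕ) (i : Fin N)
    (hi : S.P {ω | S.X (1 - (j:ℝ)) ω = i} ≠ 0) :
    ProbabilityTheory.Indep
      (mXi S (Set.Ici (1 - (j:ℝ))) {k : ℤ | 2 - (j:ℤ) ≤ k})
      (mXi S (Set.Iic (1 - (j:ℝ))) {k : ℤ | k ≤ 1 - (j:ℤ)})
      (S.P[|{ω | S.X (1 - (j:ℝ)) ω = i}]) := by
  classical
  haveI := S.hP
  set s : ℝ := 1 - (j:ℝ) with hsdef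
  set B : Set Ω := {ω | S.X s ω = i} with hBdef
  have hBmeas : MeasurableSet B := S.hX_meas s (finmeas {i})
  have hBfin : S.P B ≠ ⊤ := measure_ne_top _ _
  haveI : IsProbabilityMeasure (S.P[|B]) := cond_isProbabilityMeasure hi
  have hBmX : ∀ I : Set ℝ, s ∈ I → MeasurableSet[mX S.toMSS I] B := fun I hI =>
    measurable_X_mX S.toMSS hI (finmeas {i})
  refine ProbabilityTheory.IndepSets.indep (mXi_le S _ _) (mXi_le S _ _)
    (isPiSystem_px S _ _) (isPiSystem_px S _ _)
    (generateFrom_px S _ _).symm (generateFrom_px S _ _).symm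
    ((ProbabilityTheory.IndepSets_iff _ _ _).mpr ?_)
  rintro G H ⟨GX, ⟨T, hT, f, rfl⟩, Gξ, ⟨Tξ, hTξ, Bs, hBs, rfl⟩, rfl⟩
    ⟨HX, ⟨T', hT', f', rfl⟩, Hξ, ⟨Tξ', hTξ', Cs, hCs, rfl⟩, rfl⟩
  set GX := {ω | ∀ u ∈ T, S.X u ω ∈ f u}
  set HX := {ω | ∀ u ∈ T', S.X u ω ∈ f' u}
  set Gξ := {ω | ∀ k ∈ Tξ, S.ξ k ω ∈ Bs k}
  set Hξ := {ω | ∀ k ∈ Tξ', S.ξ k ω ∈ Cs k}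
  -- measurability
  have hGXm : MeasurableSet[mX S.toMSS (Set.Ici s)] GX := by
    have h : GX = ⋂ u ∈ T, S.X u ⁻¹' f u := by ext ω; simp [GX]
    rw [h]
    exact Finset.measurableSet_biInter _ fun u hu =>
      measurable_X_mX S.toMSS (hT hu) (finmeas (f u))
  have hHXm : MeasurableSet[mX S.toMSS (Set.Iic s)] HX := by
    have h : HX = ⋂ u ∈ T', S.X u ⁻¹' f' u := by ext ω; simp [HX]
    rw [h]
    exact Finset.measurableSet_biInter _ fun u hu =>
      measurable_X_mX S.toMSS (hT' hu) (finmeas (f' u))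
  have hdisjT : Disjoint Tξ Tξ' := by
    rw [Finset.disjoint_left]
    intro k hk1 hk2
    have h1 : 2 - (j:ℤ) ≤ k := hTξ hk1
    have h2 : k ≤ 1 - (j:ℤ) := hTξ' hk2
    omega
  -- Step A : the Markov factorization
  obtain ⟨g, hg⟩ := stepA S.toMSS T s (fun u hu => hT hu) f
  have hint : ∀ (H' : Set Ω), MeasurableSet[mX S.toMSS (Set.Iic s)] H' → H' ⊆ B →
      (S.P (H' ∩ GX)).toReal = g i * (S.P H').toReal := by
    intro H' hH' hH'B
    rw [hg H' hH']
    have : ∀ ω ∈ H', g (S.X s ω) = g i := fun ω hω => by rw [hH'B hω]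
    rw [setIntegral_congr_fun (mX_le S.toMSS _ _ hH') this, setIntegral_const, smul_eq_mul,
      mul_comm]
    rfl
  have hHXB : MeasurableSet[mX S.toMSS (Set.Iic s)] (HX ∩ B) :=
    hHXm.inter (hBmX _ Set.self_mem_Iic)
  have hXkey : S.P ((GX ∩ HX) ∩ B) * S.P B = S.P (GX ∩ B) * S.P (HX ∩ B) := by
    have e1 : (S.P ((HX ∩ B) ∩ GX)).toReal = g i * (S.P (HX ∩ B)).toReal :=
      hint _ hHXB Set.inter_subset_right
    have e2 : (S.P (B ∩ GX)).toReal = g i * (S.P B).toReal :=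
      hint B (hBmX _ Set.self_mem_Iic) subset_rfl
    have hre : (S.P ((GX ∩ HX) ∩ B)).toReal * (S.P B).toReal
        = (S.P (GX ∩ B)).toReal * (S.P (HX ∩ B)).toReal := by
      have hs1 : (GX ∩ HX) ∩ B = (HX ∩ B) ∩ GX := by
        ext ω; simp only [Set.mem_inter_iff]; tauto
      have hs2 : GX ∩ B = B ∩ GX := Set.inter_comm _ _
      rw [hs1, hs2, e1, e2]; ring
    have h1 : S.P ((GX ∩ HX) ∩ B) * S.P B ≠ ⊤ :=
      ENNReal.mul_ne_top (measure_ne_top _ _) (measure_ne_top _ _)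
    have h2 : S.P (GX ∩ B) * S.P (HX ∩ B) ≠ ⊤ :=
      ENNReal.mul_ne_top (measure_ne_top _ _) (measure_ne_top _ _)
    rw [← ENNReal.toReal_eq_toReal_iff' h1 h2] at *
    rw [ENNReal.toReal_mul, ENNReal.toReal_mul]
    exact hre
  -- ξ measurability in the big sup
  have hGξm := measurable_cyl_xi S Tξ Bs hBs
  have hHξm := measurable_cyl_xi S Tξ' Cs hCs
  have hGξHξm : MeasurableSet[⨆ n : ℤ, MeasurableSpace.comap (S.ξ n) inferInstance]
      (Gξ ∩ Hξ) := hGξm.inter hHξm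
  -- main multiplicative identity
  have key : S.P (B ∩ ((GX ∩ Gξ) ∩ (HX ∩ Hξ))) * S.P B = S.P (B ∩ (GX ∩ Gξ)) * S.P (B ∩ (HX ∩ Hξ)) := by
    have hs1 : B ∩ ((GX ∩ Gξ) ∩ (HX ∩ Hξ)) = (Gξ ∩ Hξ) ∩ ((GX ∩ HX) ∩ B) := by
      ext ω; simp only [Set.mem_inter_iff]; tauto
    have hs2 : B ∩ (GX ∩ Gξ) = Gξ ∩ (GX ∩ B) := by
      ext ω; simp only [Set.mem_inter_iff]; tauto
    have hs3 : B ∩ (HX ∩ Hξ) = Hξ ∩ (HX ∩ B) := by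
      ext ω; simp only [Set.mem_inter_iff]; tauto
    have hGXHXB : MeasurableSet[⨆ t : ℝ, MeasurableSpace.comap (S.X t) ⊤] ((GX ∩ HX) ∩ B) := by
      refine MeasurableSet.inter (MeasurableSet.inter ?_ ?_) ?_
      · exact measurable_cyl_X S.toMSS _ hGXm
      · exact measurable_cyl_X S.toMSS _ hHXm
      · exact measurable_cyl_X S.toMSS _ (hBmX (Set.Iic s) Set.self_mem_Iic)
    have hGXB : MeasurableSet[⨆ t : ℝ, MeasurableSpace.comap (S.X t) ⊤] (GX ∩ B) :=
      (measurable_cyl_X S.toMSS _ hGXm).inter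
        (measurable_cyl_X S.toMSS _ (hBmX (Set.Iic s) Set.self_mem_Iic))
    have hHXB' : MeasurableSet[⨆ t : ℝ, MeasurableSpace.comap (S.X t) ⊤] (HX ∩ B) :=
      measurable_cyl_X S.toMSS _ hHXB
    rw [hs1, hs2, hs3, xiX_mul S hGξHξm hGXHXB, xiX_mul S hGξm hGXB, xiX_mul S hHξm hHXB',
      xi_cyl_mul S Tξ Tξ' hdisjT Bs Cs hBs hCs]
    calc S.P Gξ * S.P Hξ * S.P (GX ∩ HX ∩ B) * S.P B
        = S.P Gξ * S.P Hξ * (S.P (GX ∩ HX ∩ B) * S.P B) := by ring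
      _ = S.P Gξ * S.P Hξ * (S.P (GX ∩ B) * S.P (HX ∩ B)) := by rw [hXkey]
      _ = S.P Gξ * (S.P (GX ∩ B)) * (S.P Hξ * S.P (HX ∩ B)) := by ring
  -- conclude for the conditional measure
  simp only [cond_apply hBmeas]

  have hc : (S.P B)⁻¹ * S.P B = 1 := ENNReal.inv_mul_cancel hi hBfin
  have hmain : S.P (B ∩ ((GX ∩ Gξ) ∩ (HX ∩ Hξ)))
      = (S.P B)⁻¹ * (S.P (B ∩ (GX ∩ Gξ)) * S.P (B ∩ (HX ∩ Hξ))) := by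
    rw [← key, mul_comm (S.P (B ∩ ((GX ∩ Gξ) ∩ (HX ∩ Hξ)))) (S.P B), ← mul_assoc, hc, one_mul]
  rw [hmain]
  ring

end SymmAux

/-- **Lemma 3 (symmetrization inequality).** For all `t > 0` and `n ≥ 1`, if for each
`1 ≤ j ≤ n` and `i ∈ E`, `m j i` is a median of `(R_1^n - R_1^j)/Π_j` given
`X_{1-j} = i`, then, with `med_- = min_i m j i`,
`P_μ(max_{1 ≤ j ≤ n} {R_1^j + Π_j med_-((R_1^n - R_1^j)/Π_j)} > t) ≤ 2 P_μ(R_1^n > t)`. -/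
theorem symmetrization_inequality {N : ℕ} {Ω : Type*} [MeasurableSpace Ω]
    (S : MSSN N Ω) (hα : ∑ i, S.a i * S.μ i < 0)
    (t : ℝ) (ht : 0 < t) (n : ℕ) (hn : 1 ≤ n) (m : ℕ → Fin N → ℝ)
    (hm : ∀ j : ℕ, 1 ≤ j → j ≤ n → ∀ i : Fin N,
      IsCondMedian S.P {ω | S.X (1 - (j : ℝ)) ω = i}
        (fun ω => (S.R1part n ω - S.R1part j ω) / S.Pi j ω) (m j i)) :
    S.P {ω | ∃ j : ℕ, 1 ≤ j ∧ j ≤ n ∧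
        t < S.R1part j ω + S.Pi j ω * (⨅ i : Fin N, m j i)}
      ≤ 2 * S.P {ω | t < S.R1part n ω} := by
  classical
  haveI := S.hP
  -- events
  set E : ℕ → Set Ω := fun j =>
    {ω | t < S.R1part j ω + S.Pi j ω * (⨅ i : Fin N, m j i)} with hE
  set A : ℕ → Set Ω := fun j => E j ∩ ⋂ j' ∈ Finset.Ico 1 j, (E j')ᶜ with hA
  set F : Set Ω := {ω | t < S.R1part n ω} with hF
  -- σ-algebras
  set G : ℕ → MeasurableSpace Ω := fun j =>
    SymmAux.mXi S (Set.Icc (1 - (j:ℝ)) 1) {k : ℤ | 2 - (j:ℤ) ≤ k} with hG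
  have hcast : ∀ j : ℕ, (1:ℝ) - (j:ℝ) ≤ 1 := by
    intro j; have := Nat.cast_nonneg (α := ℝ) j; linarith
  have hEmeas : ∀ j, MeasurableSet[G j] (E j) := by
    intro j
    have h1 : Measurable[G j] (S.R1part j) := SymmAux.measurable_R1part S j j le_rfl
    have h2 : Measurable[G j] (S.Pi j) :=
      SymmAux.measurable_mX_mXi S (SymmAux.measurable_Pi S (hcast j) le_rfl le_rfl)
    exact measurableSet_lt measurable_const (h1.add (h2.mul_const _))
  have hGmono : ∀ {j j' : ℕ}, j' ≤ j → G j' ≤ G j := by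
    intro j j' h
    refine sup_le_sup ?_ ?_
    · refine SymmAux.mX_mono _ (Set.Icc_subset_Icc ?_ le_rfl)
      have : (j':ℝ) ≤ (j:ℝ) := by exact_mod_cast h
      linarith
    · refine biSup_mono fun k hk => ?_
      simp only [Set.mem_setOf_eq] at hk ⊢
      omega
  have hAmeasG : ∀ j, MeasurableSet[G j] (A j) := by
    intro j
    refine (hEmeas j).inter (Finset.measurableSet_biInter _ fun j' hj' => ?_)
    exact ((hGmono (Finset.mem_Ico.mp hj').2.le) _ (hEmeas j')).compl
  have hEmeasAmb : ∀ j, MeasurableSet (E j) := fun j => SymmAux.mXi_le S _ _ _ (hEmeas j)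
  have hAmeasAmb : ∀ j, MeasurableSet (A j) := by
    intro j
    exact (hEmeasAmb j).inter (Finset.measurableSet_biInter _ fun j' _ => (hEmeasAmb j').compl)
  have hFmeas : MeasurableSet F := by
    have h1 : Measurable[G n] (S.R1part n) := SymmAux.measurable_R1part S n n le_rfl
    exact measurableSet_lt measurable_const (h1.mono (SymmAux.mXi_le S _ _) le_rfl)
  -- rewrite the left-hand event
  have hLHS : {ω | ∃ j : ℕ, 1 ≤ j ∧ j ≤ n ∧
      t < S.R1part j ω + S.Pi j ω * (⨅ i : Fin N, m j i)}
      = ⋃ j ∈ Finset.Icc 1 n, E j := by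
    ext ω
    simp only [Set.mem_setOf_eq, Set.mem_iUnion, Finset.mem_Icc, hE]
    constructor
    · rintro ⟨j, h1, h2, h3⟩; exact ⟨j, ⟨h1, h2⟩, h3⟩
    · rintro ⟨j, ⟨h1, h2⟩, h3⟩; exact ⟨j, h1, h2, h3⟩
  -- cover by first-entry events
  have hcover : (⋃ j ∈ Finset.Icc 1 n, E j) ⊆ ⋃ j ∈ Finset.Icc 1 n, A j := by
    intro ω hω
    rw [Set.mem_iUnion₂] at hω ⊢
    obtain ⟨j, hj, hωj⟩ := hω
    set Js := (Finset.Icc 1 n).filter (fun j' => ω ∈ E j') with hJs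
    have hJne : Js.Nonempty := ⟨j, Finset.mem_filter.mpr ⟨hj, hωj⟩⟩
    set j₀ := Js.min' hJne with hj₀def
    have hj₀ : j₀ ∈ Js := Js.min'_mem hJne
    obtain ⟨hj₀Icc, hωj₀⟩ := Finset.mem_filter.mp hj₀
    refine ⟨j₀, hj₀Icc, hωj₀, ?_⟩
    rw [Set.mem_iInter₂]
    intro j' hj'
    obtain ⟨h1j', h2j'⟩ := Finset.mem_Ico.mp hj'
    intro hcontra
    have hj'Js : j' ∈ Js := Finset.mem_filter.mpr
      ⟨Finset.mem_Icc.mpr ⟨h1j', le_trans h2j'.le (Finset.mem_Icc.mp hj₀Icc).2⟩, hcontra⟩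
    exact absurd (Js.min'_le j' hj'Js) (by omega)
  -- pairwise disjointness of the A j
  have hdisjA : ∀ j j', 1 ≤ j → j < j' → Disjoint (A j) (A j') := by
    intro j j' h1 hlt
    rw [Set.disjoint_left]
    intro ω hωj hωj'
    have h2 := hωj'.2
    rw [Set.mem_iInter₂] at h2
    exact h2 j (Finset.mem_Ico.mpr ⟨h1, hlt⟩) hωj.1
  -- the key per-index bound
  have hkey : ∀ j, 1 ≤ j → j ≤ n → S.P (A j) ≤ 2 * S.P (A j ∩ F) := by
    intro j hj1 hjn
    set B : Fin N → Set Ω := fun i => {ω | S.X (1 - (j:ℝ)) ω = i} with hB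
    have hBmeas : ∀ i, MeasurableSet (B i) := fun i => S.hX_meas _ (finmeas {i})
    have hBne : ∀ i, S.P (B i) ≠ 0 := by
      intro i
      rw [hB]
      show S.P {ω | S.X (1 - (j:ℝ)) ω = i} ≠ 0
      rw [S.hX_marginal (1 - (j:ℝ)) i]
      exact (ENNReal.ofReal_pos.mpr (S.hμ_pos i)).ne'
    have hBdisj : ∀ i i' : Fin N, i ≠ i' → Disjoint (B i) (B i') := by
      intro i i' hne
      rw [Set.disjoint_left]
      intro ω h1 h2
      exact hne (h1.symm.trans h2)
    set Hs : Fin N → Set Ω := fun i =>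
      {ω | m j i ≤ (S.R1part n ω - S.R1part j ω) / S.Pi j ω} with hHs
    have hPA : S.P (A j) = ∑ i : Fin N, S.P (A j ∩ B i) := by
      have hU : A j = ⋃ i : Fin N, (A j ∩ B i) := by
        ext ω
        simp only [Set.mem_iUnion, Set.mem_inter_iff]
        constructor
        · exact fun h => ⟨S.X (1 - (j:ℝ)) ω, h, rfl⟩
        · rintro ⟨i, h, -⟩; exact h
      have hdis : Pairwise (Function.onFun Disjoint fun i => A j ∩ B i) := fun i i' hne =>
        (hBdisj i i' hne).mono Set.inter_subset_right Set.inter_subset_right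
      have h := measure_iUnion (μ := S.P) hdis fun i => (hAmeasAmb j).inter (hBmeas i)
      rw [tsum_fintype] at h
      conv_lhs => rw [hU]
      exact h
    have hPAF : S.P (A j ∩ F) = ∑ i : Fin N, S.P ((A j ∩ F) ∩ B i) := by
      have hU : A j ∩ F = ⋃ i : Fin N, ((A j ∩ F) ∩ B i) := by
        ext ω
        simp only [Set.mem_iUnion, Set.mem_inter_iff]
        constructor
        · exact fun h => ⟨S.X (1 - (j:ℝ)) ω, h, rfl⟩
        · rintro ⟨i, h, -⟩; exact h
      have hdis : Pairwise (Function.onFun Disjoint fun i => (A j ∩ F) ∩ B i) := fun i i' hne =>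
        (hBdisj i i' hne).mono Set.inter_subset_right Set.inter_subset_right
      have h := measure_iUnion (μ := S.P) hdis
        fun i => ((hAmeasAmb j).inter hFmeas).inter (hBmeas i)
      rw [tsum_fintype] at h
      conv_lhs => rw [hU]
      exact h
    have hstate : ∀ i, S.P (A j ∩ B i) ≤ 2 * S.P ((A j ∩ F) ∩ B i) := by
      intro i
      have hind := SymmAux.indep_cond S j i (hBne i)
      have hA1 : MeasurableSet[SymmAux.mXi S (Set.Ici (1 - (j:ℝ)))
          {k : ℤ | 2 - (j:ℤ) ≤ k}] (A j) := by
        refine (sup_le_sup (SymmAux.mX_mono _ fun x hx => hx.1) le_rfl :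
          G j ≤ _) _ (hAmeasG j)
      have hH1 : MeasurableSet[SymmAux.mXi S (Set.Iic (1 - (j:ℝ)))
          {k : ℤ | k ≤ 1 - (j:ℤ)}] (Hs i) := by
        have hDm := SymmAux.measurable_D S j n hjn
        have hset : Hs i = {ω | m j i ≤ ∑ k ∈ Finset.Ico j n,
            (∏ k' ∈ Finset.Ico j k, S.Phin (1 - k') ω) * S.b (1 - k) ω} := by
          ext ω
          simp only [hHs, Set.mem_setOf_eq, SymmAux.D_eq S j n hjn ω]
        rw [hset]
        exact measurableSet_le measurable_const hDm
      have hindep := (ProbabilityTheory.Indep_iff _ _ _).mp hind (A j) (Hs i) hA1 hH1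
      have hmed : (1:ENNReal)/2 ≤ (S.P[|B i]) (Hs i) := (hm j hj1 hjn i).2
      have hfin : S.P (B i) ≠ ⊤ := measure_ne_top _ _
      have hcondbound : (S.P[|B i]) (A j) ≤ 2 * (S.P[|B i]) (A j ∩ Hs i) := by
        calc (S.P[|B i]) (A j) = 2 * ((S.P[|B i]) (A j) * (1/2)) := by
              rw [mul_comm ((S.P[|B i]) (A j)) ((1:ENNReal)/2), ← mul_assoc, one_div,
                ENNReal.mul_inv_cancel (by norm_num) (by norm_num), one_mul]
          _ ≤ 2 * ((S.P[|B i]) (A j) * (S.P[|B i]) (Hs i)) := by gcongr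
          _ = 2 * (S.P[|B i]) (A j ∩ Hs i) := by rw [hindep]
      have hcA : (S.P[|B i]) (A j) = (S.P (B i))⁻¹ * S.P (B i ∩ A j) :=
        cond_apply (hBmeas i) S.P (A j)
      have hcAH : (S.P[|B i]) (A j ∩ Hs i)
          = (S.P (B i))⁻¹ * S.P (B i ∩ (A j ∩ Hs i)) := cond_apply (hBmeas i) S.P _
      rw [hcA, hcAH] at hcondbound
      have h1 : S.P (B i ∩ A j) ≤ 2 * S.P (B i ∩ (A j ∩ Hs i)) := by
        calc S.P (B i ∩ A j) = S.P (B i) * ((S.P (B i))⁻¹ * S.P (B i ∩ A j)) := by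
              rw [← mul_assoc, ENNReal.mul_inv_cancel (hBne i) hfin, one_mul]
          _ ≤ S.P (B i) * (2 * ((S.P (B i))⁻¹ * S.P (B i ∩ (A j ∩ Hs i)))) := by
              gcongr
          _ = 2 * ((S.P (B i) * (S.P (B i))⁻¹) * S.P (B i ∩ (A j ∩ Hs i))) := by ring
          _ = 2 * S.P (B i ∩ (A j ∩ Hs i)) := by
              rw [ENNReal.mul_inv_cancel (hBne i) hfin, one_mul]
      have hsub : B i ∩ (A j ∩ Hs i) ⊆ (A j ∩ F) ∩ B i := by
        rintro ω ⟨hωB, hωA, hωH⟩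
        refine ⟨⟨hωA, ?_⟩, hωB⟩
        have hPiPos : 0 < S.Pi j ω := SymmAux.Pi_pos S j ω
        have hEj : t < S.R1part j ω + S.Pi j ω * (⨅ i' : Fin N, m j i') := hωA.1
        have hinf : (⨅ i' : Fin N, m j i') ≤ m j i :=
          ciInf_le (Set.Finite.bddBelow (Set.finite_range _)) i
        have hmD : m j i ≤ (S.R1part n ω - S.R1part j ω) / S.Pi j ω := hωH
        have h2 : S.Pi j ω * (⨅ i' : Fin N, m j i') ≤
            S.Pi j ω * ((S.R1part n ω - S.R1part j ω) / S.Pi j ω) :=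
          mul_le_mul_of_nonneg_left (le_trans hinf hmD) hPiPos.le
        have h3 : S.Pi j ω * ((S.R1part n ω - S.R1part j ω) / S.Pi j ω)
            = S.R1part n ω - S.R1part j ω := by
          field_simp
        show t < S.R1part n ω
        rw [h3] at h2
        linarith
      calc S.P (A j ∩ B i) = S.P (B i ∩ A j) := by rw [Set.inter_comm]
        _ ≤ 2 * S.P (B i ∩ (A j ∩ Hs i)) := h1
        _ ≤ 2 * S.P ((A j ∩ F) ∩ B i) := mul_le_mul_right (measure_mono hsub) 2
    calc S.P (A j) = ∑ i : Fin N, S.P (A j ∩ B i) := hPA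
      _ ≤ ∑ i : Fin N, 2 * S.P ((A j ∩ F) ∩ B i) := Finset.sum_le_sum fun i _ => hstate i
      _ = 2 * ∑ i : Fin N, S.P ((A j ∩ F) ∩ B i) := by rw [Finset.mul_sum]
      _ = 2 * S.P (A j ∩ F) := by rw [← hPAF]
  -- conclusion
  calc S.P {ω | ∃ j : ℕ, 1 ≤ j ∧ j ≤ n ∧
        t < S.R1part j ω + S.Pi j ω * (⨅ i : Fin N, m j i)}
      = S.P (⋃ j ∈ Finset.Icc 1 n, E j) := by rw [hLHS]
    _ ≤ S.P (⋃ j ∈ Finset.Icc 1 n, A j) := measure_mono hcover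
    _ ≤ ∑ j ∈ Finset.Icc 1 n, S.P (A j) := measure_biUnion_finset_le _ _
    _ ≤ ∑ j ∈ Finset.Icc 1 n, 2 * S.P (A j ∩ F) :=
        Finset.sum_le_sum fun j hj =>
          hkey j (Finset.mem_Icc.mp hj).1 (Finset.mem_Icc.mp hj).2
    _ = 2 * ∑ j ∈ Finset.Icc 1 n, S.P (A j ∩ F) := by rw [Finset.mul_sum]
    _ = 2 * S.P (⋃ j ∈ Finset.Icc 1 n, (A j ∩ F)) := by
        congr 1
        have hPD : (↑(Finset.Icc 1 n) : Set ℕ).PairwiseDisjoint fun j => A j ∩ F := by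
          intro j hj j' hj' hne
          rcases lt_or_gt_of_ne hne with h | h
          · exact ((hdisjA j j' (Finset.mem_Icc.mp (Finset.mem_coe.mp hj)).1 h).mono
              Set.inter_subset_left Set.inter_subset_left)
          · exact ((hdisjA j' j (Finset.mem_Icc.mp (Finset.mem_coe.mp hj')).1 h).symm.mono
              Set.inter_subset_left Set.inter_subset_left)
        exact (measure_biUnion_finset hPD fun j _ => (hAmeasAmb j).inter hFmeas).symm
    _ ≤ 2 * S.P F := by
        gcongr
        exact Set.iUnion₂_subset fun j _ => Set.inter_subset_right
end
end
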